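/- arXiv:1312.4979 — 2 statements merged into one kernel-verified Lean document; each statement's English description precedes it below -/
import Mathlib

section
/- Let M be a nonnegative RCLL martingale under Q with M_0 = 1, τ = inf{t : M_t = 0}, and define P by dP/dQ|_{F_t} = M_{τ∧t}. For n ≥ 1 let τ_n = inf{t ≥ 0 : M_t < 1/n}. Then for each t and n, the measures P and Q are equivalent on the σ-algebra F_{t ∧ τ_n}. -/
open MeasureTheory Filter Set
open scoped ENNReal NNReal Topology

/-- First-hitting bound over a finite set of times. -/
lemma firstHit_bound {Ω : Type*} {mΩ : MeasurableSpace Ω} (ℱ : Filtration ℝ mΩ)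
    (Q : Measure Ω) [IsProbabilityMeasure Q] (M : ℝ → Ω → ℝ) (T : ℝ)
    (hmart : Martingale M ℱ Q) (ε : ℝ) (hε : 0 < ε)
    (F : Finset ℝ) (hF : ∀ v ∈ F, v ≤ T) :
    ∫ ω in ⋃ v ∈ F, {ω | M v ω < ε}, M T ω ∂Q ≤ ε := by
  classical
  have hMmeas : ∀ v : ℝ, Measurable[ℱ v] (M v) := fun v => (hmart.stronglyAdapted v).measurable
  set E : ℝ → Set Ω := fun v =>
    {ω | M v ω < ε} ∩ ⋂ u ∈ F.filter (· < v), {ω | ε ≤ M u ω} with hE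
  have hEv : ∀ v ∈ F, MeasurableSet[ℱ v] (E v) := by
    intro v hv
    refine ((hMmeas v) measurableSet_Iio).inter ?_
    refine Finset.measurableSet_biInter _ (fun u hu => ?_)
    have huv : u ≤ v := le_of_lt (Finset.mem_filter.mp hu).2
    exact ℱ.mono huv _ ((hMmeas u) measurableSet_Ici)
  have hEvm : ∀ v ∈ F, MeasurableSet (E v) := fun v hv => ℱ.le v _ (hEv v hv)
  have hdisj : Set.Pairwise (↑F) (Function.onFun Disjoint E) := by
    have key : ∀ u ∈ F, ∀ v ∈ F, u < v → Disjoint (E u) (E v) := by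
      intro u hu v hv huv
      refine Set.disjoint_left.mpr fun ω hωu hωv => ?_
      have h1 : M u ω < ε := hωu.1
      have h2 : ε ≤ M u ω := by
        have := hωv.2
        have hmem : u ∈ F.filter (· < v) := Finset.mem_filter.mpr ⟨hu, huv⟩
        exact Set.mem_iInter₂.mp this u hmem
      linarith
    intro u hu v hv huv
    rcases lt_or_gt_of_ne huv with h | h
    · exact key u hu v hv h
    · exact (key v hv u hu h).symm
  have hcover : (⋃ v ∈ F, {ω | M v ω < ε}) = ⋃ v ∈ F, E v := by
    apply Set.Subset.antisymm
    · intro ω hω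
      simp only [Set.mem_iUnion] at hω ⊢
      obtain ⟨v, hv, hωv⟩ := hω
      have hWne : (F.filter (fun u => M u ω < ε)).Nonempty :=
        ⟨v, Finset.mem_filter.mpr ⟨hv, hωv⟩⟩
      set v₀ := (F.filter (fun u => M u ω < ε)).min' hWne with hv₀
      have hv₀mem := (F.filter (fun u => M u ω < ε)).min'_mem hWne
      have hv₀F : v₀ ∈ F := (Finset.mem_filter.mp hv₀mem).1
      refine ⟨v₀, hv₀F, (Finset.mem_filter.mp hv₀mem).2, ?_⟩
      refine Set.mem_iInter₂.mpr fun u hu => ?_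
      by_contra hlt
      simp only [Set.mem_setOf_eq, not_le] at hlt
      have huW : u ∈ F.filter (fun u => M u ω < ε) :=
        Finset.mem_filter.mpr ⟨(Finset.mem_filter.mp hu).1, hlt⟩
      have := (F.filter (fun u => M u ω < ε)).min'_le u huW
      exact absurd ((Finset.mem_filter.mp hu).2) (not_lt.mpr this)
    · refine Set.iUnion₂_mono fun v hv => ?_
      exact Set.inter_subset_left
  rw [hcover]
  have hint : ∀ v ∈ F, IntegrableOn (M T) (E v) Q :=
    fun v hv => (hmart.integrable T).integrableOn
  rw [integral_biUnion_finset F hEvm hdisj hint]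
  have hstep : ∀ v ∈ F, ∫ ω in E v, M T ω ∂Q ≤ (Q (E v)).toReal * ε := by
    intro v hv
    rw [← hmart.setIntegral_eq (hF v hv) (hEv v hv)]
    calc ∫ ω in E v, M v ω ∂Q ≤ ∫ _ω in E v, ε ∂Q := by
          refine setIntegral_mono_on ((hmart.integrable v).integrableOn)
            (integrable_const ε).integrableOn (hEvm v hv) (fun ω hω => le_of_lt hω.1)
      _ = (Q (E v)).toReal * ε := by
          rw [setIntegral_const, smul_eq_mul, measureReal_def]
  calc ∑ v ∈ F, ∫ ω in E v, M T ω ∂Q ≤ ∑ v ∈ F, (Q (E v)).toReal * ε :=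
        Finset.sum_le_sum hstep
    _ = (∑ v ∈ F, (Q (E v)).toReal) * ε := by rw [Finset.sum_mul]
    _ ≤ 1 * ε := by
        refine mul_le_mul_of_nonneg_right ?_ (le_of_lt hε)
        have h1 : (∑ v ∈ F, (Q (E v)).toReal) = (∑ v ∈ F, Q (E v)).toReal := by
          rw [ENNReal.toReal_sum (fun v hv => measure_ne_top Q _)]
        rw [h1, ← measure_biUnion_finset hdisj hEvm]
        exact ENNReal.toReal_le_of_le_ofReal zero_le_one (by simpa using prob_le_one)
    _ = ε := one_mul ε

/-- A sequence of rationals decreasing to `b` from the right, within `(b, T]`. -/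
lemma rat_seq {b T : ℝ} (hb : 0 ≤ b) (hbT : b < T) :
    ∃ q : ℕ → ℚ, (∀ m, b < (q m : ℝ) ∧ (q m : ℝ) ≤ T ∧ 0 ≤ (q m : ℝ)) ∧
      Tendsto (fun m => ((q m : ℚ) : ℝ)) atTop (𝓝 b) := by
  have hex : ∀ m : ℕ, ∃ q : ℚ, b < (q : ℝ) ∧ (q : ℝ) < min T (b + 1 / ((m : ℝ) + 1)) := by
    intro m
    exact exists_rat_btwn (lt_min hbT (lt_add_of_pos_right b (by positivity)))
  choose q h1 h2 using hex
  refine ⟨q, fun m => ⟨h1 m, le_of_lt ((h2 m).trans_le (min_le_left _ _)),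
    le_trans hb (le_of_lt (h1 m))⟩, ?_⟩
  have hupper : Tendsto (fun m : ℕ => b + 1 / ((m : ℝ) + 1)) atTop (𝓝 b) := by
    have h := (tendsto_const_nhds (x := b)).add tendsto_one_div_add_atTop_nhds_zero_nat
    simpa using h
  refine tendsto_of_tendsto_of_tendsto_of_le_of_le tendsto_const_nhds hupper
    (fun m => le_of_lt (h1 m)) (fun m => le_of_lt ((h2 m).trans_le (min_le_right _ _)))

/-- With `M` a nonnegative RCLL `Q`-martingale, `M 0 = 1`, not jumping to zero,
`τ = inf {t : M t = 0}`, `P` defined by `dP/dQ|_{F_t} = M (τ ∧ t)`, and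
`τ_n = inf {t ≥ 0 : M t < 1/n}`, the measures `P` and `Q` are equivalent on the σ-algebra
`F_{t ∧ τ_n}` for each `t ∈ [0, T]` and each `n ≥ 1`. -/
theorem equivalent_on_stopped_sigma_algebra
    {Ω : Type*} {mΩ : MeasurableSpace Ω} (ℱ : Filtration ℝ mΩ)
    (Q : Measure Ω) [IsProbabilityMeasure Q]
    (M : ℝ → Ω → ℝ) (T : ℝ) (hT : 0 < T)
    (hmart : Martingale M ℱ Q)
    (hprog : ProgMeasurable ℱ M)
    (hnonneg : ∀ t ω, 0 ≤ M t ω)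
    (hM0 : ∀ᵐ ω ∂Q, M 0 ω = 1)
    -- RCLL paths
    (hrc : ∀ ω, ∀ t : ℝ, ContinuousWithinAt (fun s => M s ω) (Set.Ici t) t)
    (hll : ∀ ω, ∀ t : ℝ, 0 < t →
      ∃ l : ℝ, Tendsto (fun s => M s ω) (nhdsWithin t (Set.Iio t)) (nhds l))
    -- the hitting time of zero, with convention `inf ∅ = +∞`
    (τ : Ω → ℝ≥0∞)
    (hτ : ∀ ω, τ ω = ⨅ t ∈ {s : ℝ | 0 ≤ s ∧ M s ω = 0}, ENNReal.ofReal t)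
    -- `M` does not jump to zero
    (hnojump : Q ({ω | τ ω ≤ ENNReal.ofReal T} ∩
      {ω | 0 < Function.leftLim (fun s => M s ω) ((τ ω).toReal)}) = 0)
    -- the times `τ_n = inf {t ≥ 0 : M t < 1/n}`
    (τn : ℕ → Ω → ℝ≥0∞)
    (hτn : ∀ n ω, τn n ω = ⨅ t ∈ {s : ℝ | 0 ≤ s ∧ M s ω < 1 / (n : ℝ)}, ENNReal.ofReal t)
    (P : Measure Ω)
    (hP : P = Q.withDensity
      (fun ω => ENNReal.ofReal (M ((min (τ ω) (ENNReal.ofReal T)).toReal) ω))) :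
    ∀ n : ℕ, 1 ≤ n → ∀ t : ℝ, 0 ≤ t → t ≤ T →
      ∀ (h : IsStoppingTime ℱ (fun ω => (min (τn n ω) (ENNReal.ofReal t)).toReal))
        (s : Set Ω), MeasurableSet[h.measurableSpace] s → (P s = 0 ↔ Q s = 0) := by
  classical
  intro n hn t ht htT h s hs
  set σ : Ω → ℝ := fun ω => (min (τn n ω) (ENNReal.ofReal t)).toReal with hσdef
  have hnpos : (0:ℝ) < 1 / n :=
    one_div_pos.mpr (by exact_mod_cast lt_of_lt_of_le zero_lt_one hn)
  have hσ_le_t : ∀ ω, σ ω ≤ t := fun ω =>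
    ENNReal.toReal_le_of_le_ofReal ht (min_le_right _ _)
  have hσ_nonneg : ∀ ω, 0 ≤ σ ω := fun ω => ENNReal.toReal_nonneg
  have hsu : ∀ u : ℝ, MeasurableSet[ℱ u] (s ∩ {ω | σ ω ≤ u}) := fun u => by
    have := hs.2 u; simp only [WithTop.coe_le_coe] at this; exact this
  have hs_t : MeasurableSet[ℱ t] s := by
    have h1 := hsu t
    have heq : s ∩ {ω | σ ω ≤ t} = s := by
      apply Set.inter_eq_left.mpr
      intro ω _; exact hσ_le_t ω
    rwa [heq] at h1
  have hs_meas : MeasurableSet s := ℱ.le t s hs_t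
  have hMmeas : ∀ v : ℝ, Measurable (M v) := fun v =>
    ((hmart.stronglyAdapted v).mono (ℱ.le v)).measurable
  -- enumeration of ([0,T] ∩ ℚ) ∪ {T}
  set e : ℕ → ℝ := fun k =>
    Nat.casesOn k T (fun j => min T (max 0 ((Denumerable.ofNat ℚ j : ℚ) : ℝ))) with hedef
  have he0 : e 0 = T := rfl
  have heT : ∀ j, e j ≤ T := by
    intro j
    cases j with
    | zero => exact le_rfl
    | succ j => exact min_le_left _ _
  have he_rat : ∀ q : ℚ, 0 ≤ (q:ℝ) → (q:ℝ) ≤ T → ∃ j, e j = (q:ℝ) := by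
    intro q h0 h1
    obtain ⟨j, hj⟩ : ∃ j, Denumerable.ofNat ℚ j = q := ⟨_, Denumerable.ofNat_encode q⟩
    refine ⟨j + 1, ?_⟩
    show min T (max 0 ((Denumerable.ofNat ℚ j : ℚ) : ℝ)) = (q:ℝ)
    rw [hj, max_eq_right h0, min_eq_right h1]
  -- the measurable minorant of the density
  have hminor : ∀ ω, (⨅ j, ENNReal.ofReal (M (e j) ω)) ≤
      ENNReal.ofReal (M ((min (τ ω) (ENNReal.ofReal T)).toReal) ω) := by
    intro ω
    set c := (min (τ ω) (ENNReal.ofReal T)).toReal with hc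
    have hc0 : (0:ℝ) ≤ c := ENNReal.toReal_nonneg
    have hcT : c ≤ T := ENNReal.toReal_le_of_le_ofReal (le_of_lt hT) (min_le_right _ _)
    rcases eq_or_lt_of_le hcT with hceq | hclt
    · calc (⨅ j, ENNReal.ofReal (M (e j) ω)) ≤ ENNReal.ofReal (M (e 0) ω) := iInf_le _ 0
        _ = _ := by rw [he0, hceq]
    · obtain ⟨q, hq, hqt⟩ := rat_seq hc0 hclt
      have htend : Tendsto (fun m => ENNReal.ofReal (M ((q m : ℝ)) ω)) atTop
          (𝓝 (ENNReal.ofReal (M c ω))) := by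
        apply Tendsto.comp (ENNReal.continuous_ofReal.tendsto _)
        apply Tendsto.comp (hrc ω c)
        rw [tendsto_nhdsWithin_iff]
        exact ⟨hqt, Eventually.of_forall fun m => le_of_lt (hq m).1⟩
      refine ge_of_tendsto htend (Eventually.of_forall fun m => ?_)
      obtain ⟨j, hj⟩ := he_rat (q m) (hq m).2.2 (hq m).2.1
      calc (⨅ j, ENNReal.ofReal (M (e j) ω)) ≤ ENNReal.ofReal (M (e j) ω) := iInf_le _ j
        _ = _ := by rw [hj]
  constructor
  swap
  · -- easy direction
    intro hQs
    rw [hP, withDensity_apply _ hs_meas]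
    exact setLIntegral_measure_zero _ _ hQs
  intro hPs
  -- the density's minorant vanishes a.e. on s
  have hdens0 : ∀ᵐ ω ∂Q, ω ∈ s → (⨅ j, ENNReal.ofReal (M (e j) ω)) = 0 := by
    have hmeasg : Measurable fun ω => ⨅ j, ENNReal.ofReal (M (e j) ω) :=
      Measurable.iInf fun j => (hMmeas (e j)).ennreal_ofReal
    have hle : ∫⁻ ω in s, (⨅ j, ENNReal.ofReal (M (e j) ω)) ∂Q = 0 := by
      refine le_antisymm ?_ (by simp)
      rw [hP, withDensity_apply _ hs_meas] at hPs
      rw [← hPs]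
      exact lintegral_mono fun ω => hminor ω
    have h1 := (lintegral_eq_zero_iff hmeasg).mp hle
    have h2 : ∀ᵐ ω ∂Q.restrict s, (⨅ j, ENNReal.ofReal (M (e j) ω)) = 0 := by
      filter_upwards [h1] with ω hω using hω
    exact (ae_restrict_iff' hs_meas).mp h2
  -- membership in the "hits arbitrarily small values" set G
  set G : Set Ω := ⋂ m : ℕ, ⋃ j : ℕ, {ω | M (e j) ω < 1 / ((m:ℝ) + 1)} with hGdef
  have hGmeas : MeasurableSet G :=
    MeasurableSet.iInter fun m => MeasurableSet.iUnion fun j =>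
      measurableSet_lt (hMmeas (e j)) measurable_const
  have hsG : ∀ᵐ ω ∂Q, ω ∈ s → ω ∈ G := by
    filter_upwards [hdens0] with ω hω hωs
    have h0 := hω hωs
    refine Set.mem_iInter.mpr fun m => ?_
    have hlt : (⨅ j, ENNReal.ofReal (M (e j) ω)) < ENNReal.ofReal (1/((m:ℝ)+1)) := by
      rw [h0]
      exact ENNReal.ofReal_pos.mpr (by positivity)
    obtain ⟨j, hj⟩ := iInf_lt_iff.mp hlt
    refine Set.mem_iUnion.mpr ⟨j, ?_⟩
    exact (ENNReal.ofReal_lt_ofReal_iff (by positivity)).mp hj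
  -- M T vanishes a.e. on G
  have hMT_G : ∀ᵐ ω ∂Q, ω ∈ G → M T ω = 0 := by
    have hHbound : ∀ m : ℕ,
        ∫ ω in ⋃ j : ℕ, {ω | M (e j) ω < 1/((m:ℝ)+1)}, M T ω ∂Q ≤ 1/((m:ℝ)+1) := by
      intro m
      set Hk : ℕ → Set Ω := fun k =>
        ⋃ v ∈ (Finset.range (k+1)).image e, {ω | M v ω < 1/((m:ℝ)+1)} with hHkdef
      have hHkmeas : ∀ k, MeasurableSet (Hk k) := by
        intro k
        refine Finset.measurableSet_biUnion _ fun v hv =>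
          measurableSet_lt (hMmeas v) measurable_const
      have hmono : Monotone Hk := by
        intro k k' hkk' ω hω
        simp only [hHkdef, Set.mem_iUnion] at hω ⊢
        obtain ⟨v, hv, hmem⟩ := hω
        exact ⟨v, Finset.image_subset_image (Finset.range_subset_range.mpr (by omega)) hv, hmem⟩
      have hUnion : (⋃ k, Hk k) = ⋃ j : ℕ, {ω | M (e j) ω < 1/((m:ℝ)+1)} := by
        ext ω
        simp only [hHkdef, Set.mem_iUnion]
        constructor
        · rintro ⟨k, v, hv, hmem⟩
          obtain ⟨j, _, rfl⟩ := Finset.mem_image.mp hv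
          exact ⟨j, hmem⟩
        · rintro ⟨j, hmem⟩
          exact ⟨j, e j, Finset.mem_image.mpr ⟨j, Finset.mem_range.mpr (by omega), rfl⟩, hmem⟩
      have hbound : ∀ k, ∫ ω in Hk k, M T ω ∂Q ≤ 1/((m:ℝ)+1) := by
        intro k
        refine firstHit_bound ℱ Q M T hmart _ (by positivity) _ fun v hv => ?_
        obtain ⟨j, _, rfl⟩ := Finset.mem_image.mp hv
        exact heT j
      have htendsto := tendsto_setIntegral_of_monotone hHkmeas hmono
        ((hmart.integrable T).integrableOn)
      rw [hUnion] at htendsto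
      exact le_of_tendsto htendsto (Eventually.of_forall hbound)
    have hGint_le : ∀ m : ℕ, ∫ ω in G, M T ω ∂Q ≤ 1/((m:ℝ)+1) := by
      intro m
      refine le_trans (setIntegral_mono_set ((hmart.integrable T).integrableOn)
        (Eventually.of_forall fun ω => hnonneg T ω)
        (HasSubset.Subset.eventuallyLE (Set.iInter_subset _ m))) (hHbound m)
    have hG0 : ∫ ω in G, M T ω ∂Q = 0 := by
      refine le_antisymm ?_ (setIntegral_nonneg hGmeas fun ω _ => hnonneg T ω)
      by_contra hpos
      push_neg at hpos
      obtain ⟨m, hm⟩ := exists_nat_one_div_lt hpos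
      exact absurd (hGint_le m) (not_le.mpr hm)
    have h1 := (setIntegral_eq_zero_iff_of_nonneg_ae
      (Eventually.of_forall fun ω => hnonneg T ω)
      ((hmart.integrable T).integrableOn)).mp hG0
    have h2 : ∀ᵐ ω ∂Q.restrict G, M T ω = 0 := by
      filter_upwards [h1] with ω hω using hω
    exact (ae_restrict_iff' hGmeas).mp h2
  have hMTs : ∀ᵐ ω ∂Q, ω ∈ s → M T ω = 0 := by
    filter_upwards [hsG, hMT_G] with ω h1 h2 hωs
    exact h2 (h1 hωs)
  -- M (e j) vanishes a.e. on s ∩ {σ ≤ e j}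
  have hPj : ∀ j : ℕ, ∀ᵐ ω ∂Q, ω ∈ s → σ ω ≤ e j → M (e j) ω = 0 := by
    intro j
    set A := s ∩ {ω | σ ω ≤ e j} with hA
    have hAf : MeasurableSet[ℱ (e j)] A := hsu (e j)
    have hAm : MeasurableSet A := ℱ.le _ _ hAf
    have hintA : ∫ ω in A, M (e j) ω ∂Q = 0 := by
      rw [hmart.setIntegral_eq (heT j) hAf]
      have hz : ∀ᵐ x ∂Q.restrict A, M T x = 0 :=
        (ae_restrict_iff' hAm).mpr (hMTs.mono fun ω hω hωA => hω hωA.1)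
      exact integral_eq_zero_of_ae hz
    have h1 := (setIntegral_eq_zero_iff_of_nonneg_ae
      (Eventually.of_forall fun ω => hnonneg _ ω)
      ((hmart.integrable _).integrableOn)).mp hintA
    have h2 : ∀ᵐ x ∂Q.restrict A, M (e j) x = 0 := by
      filter_upwards [h1] with x hx using hx
    have h3 := (ae_restrict_iff' hAm).mp h2
    filter_upwards [h3] with ω hω hs1 hs2
    exact hω ⟨hs1, hs2⟩
  have hall : ∀ᵐ ω ∂Q, ∀ j, ω ∈ s → σ ω ≤ e j → M (e j) ω = 0 := ae_all_iff.mpr hPj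
  -- M at the stopped time vanishes a.e. on s
  have hMσ_s : ∀ᵐ ω ∂Q, ω ∈ s → M (σ ω) ω = 0 := by
    filter_upwards [hall, hMTs] with ω h1 h2 hωs
    have hbT : σ ω ≤ T := le_trans (hσ_le_t ω) htT
    rcases eq_or_lt_of_le hbT with heq | hlt
    · rw [heq]; exact h2 hωs
    · obtain ⟨q, hq, hqt⟩ := rat_seq (hσ_nonneg ω) hlt
      have hzero : ∀ m, M ((q m : ℝ)) ω = 0 := by
        intro m
        obtain ⟨j, hj⟩ := he_rat (q m) (hq m).2.2 (hq m).2.1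
        rw [← hj]
        exact h1 j hωs (hj ▸ le_of_lt (hq m).1)
      have htend : Tendsto (fun m => M ((q m : ℝ)) ω) atTop (𝓝 (M (σ ω) ω)) := by
        apply Tendsto.comp (hrc ω (σ ω))
        rw [tendsto_nhdsWithin_iff]
        exact ⟨hqt, Eventually.of_forall fun m => le_of_lt (hq m).1⟩
      have h0 : Tendsto (fun m => M ((q m : ℝ)) ω) atTop (𝓝 0) := by
        rw [show (fun m => M ((q m : ℝ)) ω) = fun _ => (0:ℝ) from funext hzero]
        exact tendsto_const_nhds
      exact tendsto_nhds_unique htend h0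
  -- M at the stopped time is a.e. positive
  have hD : ∀ᵐ ω ∂Q, 0 < M (σ ω) ω := by
    have hnj : ∀ᵐ ω ∂Q, ω ∉ ({ω | τ ω ≤ ENNReal.ofReal T} ∩
        {ω | 0 < Function.leftLim (fun s => M s ω) ((τ ω).toReal)}) :=
      measure_eq_zero_iff_ae_notMem.mp hnojump
    filter_upwards [hM0, hnj] with ω h0 hnjω
    rcases (hnonneg (σ ω) ω).lt_or_eq with hpos | heq0
    · exact hpos
    exfalso
    have hMb0 : M (σ ω) ω = 0 := heq0.symm
    have hlow : ∀ u, 0 ≤ u → u < σ ω → 1/(n:ℝ) ≤ M u ω := by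
      intro u hu0 huσ
      by_contra hlt
      push_neg at hlt
      have hτn_le : τn n ω ≤ ENNReal.ofReal u := by
        rw [hτn n ω]
        exact iInf₂_le u ⟨hu0, hlt⟩
      have hle : σ ω ≤ u :=
        ENNReal.toReal_le_of_le_ofReal hu0 (le_trans (min_le_left _ _) hτn_le)
      linarith
    have hbpos : 0 < σ ω := by
      rcases (hσ_nonneg ω).lt_or_eq with hlt | heq
      · exact hlt
      · exfalso
        rw [← heq] at hMb0
        exact one_ne_zero (h0.symm.trans hMb0)
    have hτeq : τ ω = ENNReal.ofReal (σ ω) := by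
      rw [hτ ω]
      apply le_antisymm
      · exact iInf₂_le (σ ω) ⟨hσ_nonneg ω, hMb0⟩
      · refine le_iInf₂ fun u hu => ?_
        refine ENNReal.ofReal_le_ofReal ?_
        by_contra hcon
        push_neg at hcon
        have hge := hlow u hu.1 hcon
        rw [hu.2] at hge
        linarith
    have hτT' : τ ω ≤ ENNReal.ofReal T := by
      rw [hτeq]
      exact ENNReal.ofReal_le_ofReal (le_trans (hσ_le_t ω) htT)
    have hτtoReal : (τ ω).toReal = σ ω := by
      rw [hτeq, ENNReal.toReal_ofReal (hσ_nonneg ω)]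
    obtain ⟨l, hl⟩ := hll ω (σ ω) hbpos
    have hleft : Function.leftLim (fun s => M s ω) (σ ω) = l :=
      leftLim_eq_of_tendsto hl
    have hlge : 1/(n:ℝ) ≤ l := by
      refine ge_of_tendsto hl ?_
      have hmem : Set.Ioo 0 (σ ω) ∈ 𝓝[<] (σ ω) :=
        Ioo_mem_nhdsLT_of_mem ⟨hbpos, le_refl _⟩
      filter_upwards [hmem] with u hu
      exact hlow u (le_of_lt hu.1) hu.2
    exact hnjω ⟨hτT', by
      simp only [Set.mem_setOf_eq, hτtoReal, hleft]
      exact lt_of_lt_of_le hnpos hlge⟩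
  -- conclusion
  have hnot : ∀ᵐ ω ∂Q, ω ∉ s := by
    filter_upwards [hMσ_s, hD] with ω h1 h2 hωs
    exact h2.ne' (h1 hωs)
  exact measure_eq_zero_iff_ae_notMem.mpr hnot
end

section
/- Let S_t = 1 + ∫_0^t σ^S_u dW_u be a continuous local martingale under any measure Q̄ equivalent to Q, with continuous volatility σ^S, and let σ_1 = inf{t : S_t ≤ 0}, σ_2 = inf{t : σ^S_t ≤ σ̲}, σ = σ_1 ∧ σ_2, where 0 < σ̲ < σ^S_0. Then Q̄[σ ≤ T] ≥ Q̄[B*_{σ̲² T} ≤ −1] > 0, where B*_t = inf_{0≤u≤t} B_u and B is the DDS Brownian motion of the local martingale ∫ σ^S dW. In particular sup_{Q̄ ∈ ELMM} Q̄[σ > T] ≤ 1 − Q̄[B*_{σ̲²T} ≤ −1] < 1, a bound independent of Q̄. -/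
open MeasureTheory Filter Set ProbabilityTheory
open scoped ENNReal NNReal

/-- The standard normal cumulative distribution function. -/
noncomputable def stdNormalCDF (x : ℝ) : ℝ :=
  ∫ u in Set.Iic x, (Real.sqrt (2 * Real.pi))⁻¹ * Real.exp (-u ^ 2 / 2)

/-- `W` is a standard Brownian motion under `μ`. -/
def IsStandardBM {Ω : Type*} [MeasurableSpace Ω] (μ : Measure Ω)
    (W : ℝ → Ω → ℝ) : Prop :=
  (∀ ω, W 0 ω = 0) ∧ (∀ ω, Continuous fun t => W t ω) ∧
  (∀ t, Measurable (W t)) ∧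
  (∀ s t : ℝ, 0 ≤ s → s ≤ t →
    Measure.map (fun ω => W t ω - W s ω) μ
      = ProbabilityTheory.gaussianReal 0 (Real.toNNReal (t - s))) ∧
  (∀ (n : ℕ) (t : ℕ → ℝ), Monotone t → 0 ≤ t 0 →
    ProbabilityTheory.iIndepFun
      (fun (i : Fin n) ω => W (t (i + 1)) ω - W (t i) ω) μ)

lemma gaussianPDFReal_zero_one (u : ℝ) :
    gaussianPDFReal 0 1 u = (Real.sqrt (2 * Real.pi))⁻¹ * Real.exp (-u ^ 2 / 2) := by
  simp [gaussianPDFReal, neg_div]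

lemma sNC_eq (x : ℝ) : ((gaussianReal 0 1) (Iic x)).toReal = stdNormalCDF x := by
  rw [gaussianReal_apply_eq_integral 0 one_ne_zero (Iic x)]
  rw [ENNReal.toReal_ofReal (by
    refine integral_nonneg fun u => gaussianPDFReal_nonneg 0 1 u)]
  unfold stdNormalCDF
  exact setIntegral_congr_fun measurableSet_Iic fun u _ => gaussianPDFReal_zero_one u

lemma sNC_nonneg (x : ℝ) : 0 ≤ stdNormalCDF x := by
  rw [← sNC_eq]; exact ENNReal.toReal_nonneg

lemma sNC_le_one (x : ℝ) : stdNormalCDF x ≤ 1 := by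
  rw [← sNC_eq]
  have h := prob_le_one (μ := gaussianReal 0 1) (s := Iic x)
  exact ENNReal.toReal_le_of_le_ofReal one_pos.le (by simpa using h)

lemma gauss_mono_meas {s t : Set ℝ} (hs : s ⊆ t) (w : ℝ≥0) :
    ((gaussianReal 0 w) s).toReal ≤ ((gaussianReal 0 w) t).toReal :=
  ENNReal.toReal_mono (measure_ne_top _ _) (measure_mono hs)

lemma sNC_mono : Monotone stdNormalCDF := by
  intro x y hxy
  rw [← sNC_eq, ← sNC_eq]
  exact gauss_mono_meas (Iic_subset_Iic.2 hxy) 1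

lemma gauss_singleton {w : ℝ≥0} (hw : w ≠ 0) (x : ℝ) : gaussianReal 0 w {x} = 0 :=
  gaussianReal_absolutelyContinuous 0 hw (by simp)

lemma gauss_map_neg {w : ℝ≥0} :
    (gaussianReal 0 w).map (fun x => (-1 : ℝ) * x) = gaussianReal 0 w := by
  rw [gaussianReal_map_const_mul (-1)]
  norm_num

lemma gauss_Ioi_zero {w : ℝ≥0} (hw : w ≠ 0) : gaussianReal 0 w (Ioi 0) = 1/2 := by
  have hsym : gaussianReal 0 w (Iio 0) = gaussianReal 0 w (Ioi 0) := by
    conv_lhs => rw [← gauss_map_neg (w := w)]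
    rw [Measure.map_apply (measurable_const_mul _) measurableSet_Iio]
    congr 1
    ext x
    simp only [mem_preimage, mem_Iio, mem_Ioi]
    constructor <;> intro h <;> nlinarith
  have hIic : gaussianReal 0 w (Iic 0) = gaussianReal 0 w (Ioi 0) := by
    rw [← Iio_union_right, measure_union (by simp) (measurableSet_singleton 0),
      gauss_singleton hw, add_zero, hsym]
  have htot : gaussianReal 0 w (Iic 0) + gaussianReal 0 w (Ioi 0) = 1 := by
    rw [← measure_union (by simp [disjoint_left]) measurableSet_Ioi, Iic_union_Ioi]
    simp
  rw [hIic] at htot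
  have h2 : 2 * gaussianReal 0 w (Ioi 0) = 1 := by rw [two_mul]; exact htot
  rw [ENNReal.eq_div_iff (by norm_num) (by norm_num), h2]

lemma gauss_Ioi_le_half (w : ℝ≥0) : gaussianReal 0 w (Ioi 0) ≤ 1/2 := by
  by_cases hw : w = 0
  · subst hw
    rw [gaussianReal_zero_var, Measure.dirac_apply' _ measurableSet_Ioi]
    simp
  · exact (gauss_Ioi_zero hw).le

lemma gauss_scale {v : ℝ} (hv : 0 < v) :
    (gaussianReal 0 1).map (fun x => Real.sqrt v * x) = gaussianReal 0 v.toNNReal := by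
  rw [gaussianReal_map_const_mul (Real.sqrt v)]
  simp only [mul_zero, mul_one]
  congr 1
  ext
  simp [Real.sq_sqrt hv.le, Real.coe_toNNReal _ hv.le]

lemma gauss_Iic_eq {v : ℝ} (hv : 0 < v) (x : ℝ) :
    ((gaussianReal 0 v.toNNReal) (Iic x)).toReal = stdNormalCDF (x / Real.sqrt v) := by
  have hs : 0 < Real.sqrt v := Real.sqrt_pos.2 hv
  rw [← gauss_scale hv, Measure.map_apply (measurable_const_mul _) measurableSet_Iic]
  rw [show (fun y => Real.sqrt v * y) ⁻¹' Iic x = Iic (x / Real.sqrt v) by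
    ext y; simp only [mem_preimage, mem_Iic]; rw [← le_div_iff₀' hs]]
  exact sNC_eq _

lemma gauss_Ioi_eq {v : ℝ} (hv : 0 < v) (x : ℝ) :
    ((gaussianReal 0 v.toNNReal) (Ioi x)).toReal = 1 - stdNormalCDF (x / Real.sqrt v) := by
  have h := measure_add_measure_compl (μ := gaussianReal 0 v.toNNReal) (s := Iic x)
    measurableSet_Iic
  rw [compl_Iic] at h
  have h1 := ENNReal.toReal_add (measure_ne_top (gaussianReal 0 v.toNNReal) (Iic x))
    (measure_ne_top (gaussianReal 0 v.toNNReal) (Ioi x))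
  rw [h] at h1
  simp only [measure_univ, ENNReal.toReal_one] at h1
  rw [gauss_Iic_eq hv] at h1
  linarith

lemma sNC_zero : stdNormalCDF 0 = 1/2 := by
  rw [← sNC_eq]
  have h := measure_add_measure_compl (μ := gaussianReal 0 1) (s := Iic 0) measurableSet_Iic
  rw [compl_Iic] at h
  have hIic : gaussianReal 0 1 (Ioi (0:ℝ)) = 1/2 := gauss_Ioi_zero one_ne_zero
  rw [hIic] at h
  have : gaussianReal 0 1 (Iic (0:ℝ)) = 1/2 := by
    rw [measure_univ] at h
    have h3 := ENNReal.eq_sub_of_add_eq (by norm_num) h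
    rw [h3]
    rw [show (1:ℝ≥0∞) - 1/2 = 1/2 by
      rw [ENNReal.eq_div_iff (by norm_num) (by norm_num)]
      rw [ENNReal.mul_sub (by norm_num)]
      norm_num
      rw [ENNReal.mul_inv_cancel (by norm_num) (by norm_num)]
      exact ENNReal.sub_eq_of_eq_add (by norm_num) (by norm_num)]
  rw [this]
  simp [ENNReal.toReal_div]

lemma sNC_lipschitz {x y : ℝ} (hxy : y ≤ x) :
    stdNormalCDF x - stdNormalCDF y ≤ (x - y) * (Real.sqrt (2 * Real.pi))⁻¹ := by
  have hK : (0:ℝ) < (Real.sqrt (2 * Real.pi)) := Real.sqrt_pos.2 (by positivity)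
  have hint : ∀ z : ℝ, IntegrableOn (fun u => (Real.sqrt (2 * Real.pi))⁻¹ *
      Real.exp (-u ^ 2 / 2)) (Iic z) := by
    intro z
    have := integrable_gaussianPDFReal 0 1
    have h2 : (fun u => (Real.sqrt (2 * Real.pi))⁻¹ * Real.exp (-u ^ 2 / 2))
        = gaussianPDFReal 0 1 := by
      ext u; rw [gaussianPDFReal_zero_one]
    rw [h2]
    exact this.integrableOn
  have hsplit : Iic x = Iic y ∪ Ioc y x := by
    rw [Iic_union_Ioc_eq_Iic hxy]
  have hd : Disjoint (Iic y) (Ioc y x) := by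
    simp [disjoint_left]
    intro a ha; exact fun h => absurd h (not_lt.2 ha)
  have := setIntegral_union hd measurableSet_Ioc ((hint x).mono_set (by rw [hsplit]; exact subset_union_left)) ((hint x).mono_set (by rw [hsplit]; exact subset_union_right))
  unfold stdNormalCDF
  rw [hsplit, this]
  have hb : ∫ u in Ioc y x, (Real.sqrt (2 * Real.pi))⁻¹ * Real.exp (-u ^ 2 / 2)
      ≤ ∫ _ in Ioc y x, (Real.sqrt (2 * Real.pi))⁻¹ := by
    apply setIntegral_mono_on ((hint x).mono_set (by rw [hsplit]; exact subset_union_right))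
      (integrableOn_const (by simp))
      measurableSet_Ioc
    intro u _
    have : Real.exp (-u^2/2) ≤ 1 := by
      rw [Real.exp_le_one_iff]; nlinarith [sq_nonneg u]
    nlinarith [inv_nonneg.2 hK.le]
  have hc : ∫ _ in Ioc y x, (Real.sqrt (2 * Real.pi))⁻¹
      = (x - y) * (Real.sqrt (2 * Real.pi))⁻¹ := by
    simp [Real.volume_Ioc, ENNReal.toReal_ofReal (sub_nonneg.2 hxy), hxy]
  linarith [hb, hc ▸ hb]

lemma sNC_pos (x : ℝ) : 0 < stdNormalCDF x := by
  rw [← sNC_eq]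
  have h0 : volume (Iic x) ≠ 0 := by simp
  have : gaussianReal 0 1 (Iic x) ≠ 0 := by
    intro hc
    exact h0 (gaussianReal_absolutelyContinuous' 0 one_ne_zero hc)
  exact ENNReal.toReal_pos this (measure_ne_top _ _)

section BM
variable {Ω : Type*} [MeasurableSpace Ω] {Qb : Measure Ω} [IsProbabilityMeasure Qb]
  {B : ℝ → Ω → ℝ}

lemma bm_event_law (hB : IsStandardBM Qb B) {s t : ℝ} (hs : 0 ≤ s) (hst : s ≤ t)
    {A : Set ℝ} (hA : MeasurableSet A) :
    Qb {ω | B t ω - B s ω ∈ A} = gaussianReal 0 (t - s).toNNReal A := by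
  have hmeas : Measurable (fun ω => B t ω - B s ω) := (hB.2.2.1 t).sub (hB.2.2.1 s)
  rw [← hB.2.2.2.1 s t hs hst, Measure.map_apply hmeas hA]
  rfl

lemma bm_core (hB : IsStandardBM Qb B) (n k : ℕ) (hkn : k ≤ n) {h : ℝ} (hh : 0 ≤ h)
    (P : (ℕ → ℝ) → Prop) (hP : MeasurableSet {y : ℕ → ℝ | P y}) (γ : ℝ) :
    Qb ({ω | P (fun j => B ((min j k : ℕ) * h) ω)}
        ∩ {ω | γ < B ((n : ℝ) * h) ω - B ((k : ℝ) * h) ω})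
      = Qb {ω | P (fun j => B ((min j k : ℕ) * h) ω)}
        * Qb {ω | γ < B ((n : ℝ) * h) ω - B ((k : ℝ) * h) ω} := by
  classical
  obtain ⟨hB0, hBc, hBm, hBlaw, hBind⟩ := hB
  set τ : ℕ → ℝ := fun j => ((min j n : ℕ) : ℝ) * h with hτ
  have hτmono : Monotone τ := fun i j hij =>
    mul_le_mul_of_nonneg_right (Nat.cast_le.2 (min_le_min hij le_rfl)) hh
  have hτ0 : 0 ≤ τ 0 := by simp [hτ]
  set f : Fin n → Ω → ℝ := fun i ω => B (τ (i + 1)) ω - B (τ i) ω with hf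
  have hIndep : iIndepFun f Qb := hBind n τ hτmono hτ0
  have hfmeas : ∀ i, Measurable (f i) := fun i => (hBm _).sub (hBm _)
  have hτval : ∀ j ≤ n, τ j = (j : ℝ) * h := by
    intro j hj
    show ((min j n : ℕ) : ℝ) * h = (j : ℝ) * h
    rw [min_eq_left hj]
  have sumCL : ∀ (j : ℕ), j ≤ n → ∀ ω,
      (∑ i ∈ Finset.univ.filter (fun i : Fin n => (i : ℕ) < j), f i ω)
        = B ((j : ℝ) * h) ω := by
    intro j
    induction j with
    | zero =>
      intro _ ω
      simp only [Nat.not_lt_zero, Finset.filter_false, Finset.sum_empty]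
      norm_num [hB0 ω]
    | succ j ih =>
      intro hj ω
      have hjn : j < n := hj
      have hins : Finset.univ.filter (fun i : Fin n => (i : ℕ) < j + 1)
          = insert ⟨j, hjn⟩ (Finset.univ.filter (fun i : Fin n => (i : ℕ) < j)) := by
        ext i
        simp only [Finset.mem_filter, Finset.mem_univ, true_and, Finset.mem_insert,
          Fin.ext_iff]
        omega
      rw [hins, Finset.sum_insert (by simp), ih (le_of_lt hjn) ω]
      have h1 : f ⟨j, hjn⟩ ω = B ((j + 1 : ℕ) * h) ω - B ((j : ℝ) * h) ω := by
        simp only [hf]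
        rw [show ((⟨j, hjn⟩ : Fin n) : ℕ) + 1 = j + 1 from rfl,
          hτval (j + 1) hj, hτval j (le_of_lt hjn)]
      rw [h1]; push_cast; ring
  set Sf : Finset (Fin n) := Finset.univ.filter (fun i => (i : ℕ) < k) with hSf
  set Tf : Finset (Fin n) := Finset.univ.filter (fun i => ¬ (i : ℕ) < k) with hTf
  have hdisj : Disjoint Sf Tf := by
    simp only [Finset.disjoint_left, hSf, hTf, Finset.mem_filter, Finset.mem_univ, true_and]
    exact fun a ha => not_not_intro ha
  have hIF := hIndep.indepFun_finset Sf Tf hdisj hfmeas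
  set φ : (Sf → ℝ) → (ℕ → ℝ) :=
    fun x j => ∑ i : Sf, if ((i : Fin n) : ℕ) < min j k then x i else 0 with hφ
  have hφmeas : Measurable φ := by
    apply measurable_pi_lambda
    intro j
    apply Finset.measurable_sum
    intro i _
    by_cases hc : ((i : Fin n) : ℕ) < min j k
    · simpa [hc] using measurable_pi_apply i
    · simpa [hc] using (measurable_const : Measurable fun _ : Sf → ℝ => (0:ℝ))
  have hφU : ∀ ω, φ (fun i : Sf => f i ω) = fun j => B ((min j k : ℕ) * h) ω := by
    intro ω
    funext j
    have hjk : min j k ≤ n := le_trans (min_le_right _ _) hkn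
    calc (∑ i : Sf, if ((i : Fin n) : ℕ) < min j k then f i ω else 0)
        = ∑ i ∈ Sf, (if ((i : Fin n) : ℕ) < min j k then f i ω else 0) :=
          Finset.sum_coe_sort Sf (fun i : Fin n => if (i : ℕ) < min j k then f i ω else 0)
      _ = ∑ i ∈ Sf.filter (fun i : Fin n => (i : ℕ) < min j k), f i ω :=
          (Finset.sum_filter _ _).symm
      _ = ∑ i ∈ Finset.univ.filter (fun i : Fin n => (i : ℕ) < min j k), f i ω := by
          refine Finset.sum_congr ?_ (fun _ _ => rfl)
          rw [hSf, Finset.filter_filter]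
          ext i
          simp only [Finset.mem_filter, Finset.mem_univ, true_and]
          omega
      _ = B ((min j k : ℕ) * h) ω := sumCL _ hjk ω
  set ψ : (Tf → ℝ) → ℝ := fun y => ∑ i : Tf, y i with hψ
  have hψmeas : Measurable ψ := Finset.measurable_sum _ (fun i _ => measurable_pi_apply i)
  have hψV : ∀ ω, ψ (fun i : Tf => f i ω) = B ((n : ℝ) * h) ω - B ((k : ℝ) * h) ω := by
    intro ω
    have hsplit := Finset.sum_filter_add_sum_filter_not Finset.univ
      (fun i : Fin n => (i : ℕ) < k) (fun i => f i ω)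
    have huniv : ∑ i : Fin n, f i ω = B ((n : ℝ) * h) ω := by
      rw [← sumCL n le_rfl ω]
      congr 1
      ext i
      simp [i.isLt]
    have hS : ∑ i ∈ Sf, f i ω = B ((k : ℝ) * h) ω := sumCL k hkn ω
    have hT : ψ (fun i : Tf => f i ω) = ∑ i ∈ Tf, f i ω :=
      Finset.sum_coe_sort Tf (fun i : Fin n => f i ω)
    rw [hT]
    have : ∑ i ∈ Sf, f i ω + ∑ i ∈ Tf, f i ω = B ((n : ℝ) * h) ω := by
      rw [hSf, hTf]; rw [hsplit]; exact huniv
    linarith [hS ▸ this]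
  have hEU : {ω | P (fun j => B ((min j k : ℕ) * h) ω)}
      = (fun ω (i : Sf) => f i ω) ⁻¹' (φ ⁻¹' {y | P y}) := by
    ext ω
    simp only [mem_preimage, mem_setOf_eq, hφU ω]
  have hEV : {ω | γ < B ((n : ℝ) * h) ω - B ((k : ℝ) * h) ω}
      = (fun ω (i : Tf) => f i ω) ⁻¹' (ψ ⁻¹' (Ioi γ)) := by
    ext ω
    simp only [mem_preimage, mem_Ioi, mem_setOf_eq, hψV ω]
  rw [hEU, hEV]
  exact hIF.measure_inter_preimage_eq_mul _ _ (hφmeas hP) (hψmeas measurableSet_Ioi)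

end BM

section UB
variable {Ω : Type*} [MeasurableSpace Ω] {Qb : Measure Ω} [IsProbabilityMeasure Qb]
  {B : ℝ → Ω → ℝ}

lemma bm_UB (hB : IsStandardBM Qb B) (n : ℕ) {h : ℝ} (hh : 0 ≤ h) {b : ℝ} (hb : b < 0) :
    Qb {ω | ∃ k ≤ n, B ((k : ℝ) * h) ω < b} ≤ 2 * Qb {ω | B ((n : ℝ) * h) ω < b} := by
  classical
  have hBm := hB.2.2.1
  set A : ℕ → Set Ω :=
    fun k => {ω | B ((k : ℝ) * h) ω < b ∧ ∀ j < k, b ≤ B ((j : ℝ) * h) ω} with hA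
  have hAmeas : ∀ k, MeasurableSet (A k) := by
    intro k
    have h1 : MeasurableSet {ω | B ((k : ℝ) * h) ω < b} :=
      measurableSet_lt (hBm _) measurable_const
    have h2 : MeasurableSet {ω | ∀ j < k, b ≤ B ((j : ℝ) * h) ω} := by
      have he : {ω | ∀ j < k, b ≤ B ((j : ℝ) * h) ω}
          = ⋂ j, ⋂ (_ : j < k), {ω | b ≤ B ((j : ℝ) * h) ω} := by
        ext ω; simp
      rw [he]
      exact MeasurableSet.iInter fun j => MeasurableSet.iInter fun _ =>
        measurableSet_le measurable_const (hBm _)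
    exact h1.inter h2
  have hU : {ω | ∃ k ≤ n, B ((k : ℝ) * h) ω < b} = ⋃ k ∈ Finset.range (n + 1), A k := by
    ext ω
    simp only [mem_setOf_eq, mem_iUnion, Finset.mem_range, Nat.lt_succ_iff]
    constructor
    · rintro ⟨k, hk, hkb⟩
      have hex : ∃ m : ℕ, B ((m : ℝ) * h) ω < b := ⟨k, hkb⟩
      refine ⟨Nat.find hex, le_trans (Nat.find_min' hex hkb) hk, ⟨Nat.find_spec hex, ?_⟩⟩
      intro j hj
      exact not_lt.1 (Nat.find_min hex hj)
    · rintro ⟨k, hk, hωk⟩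
      exact ⟨k, hk, hωk.1⟩
  have hdisj : (↑(Finset.range (n + 1)) : Set ℕ).PairwiseDisjoint A := by
    intro i _ k _ hik
    rcases hik.lt_or_gt with hlt | hlt
    · refine Set.disjoint_left.2 fun ω hωi hωk => ?_
      exact absurd hωi.1 (not_lt.2 (hωk.2 i hlt))
    · refine Set.disjoint_left.2 fun ω hωi hωk => ?_
      exact absurd hωk.1 (not_lt.2 (hωi.2 k hlt))
  set s : Set Ω := {ω | B ((n : ℝ) * h) ω < b} with hs
  have hsm : MeasurableSet s := measurableSet_lt (hBm _) measurable_const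
  have key : ∀ k ≤ n, Qb (A k) ≤ Qb (A k ∩ s) + Qb (A k) * (1 / 2) := by
    intro k hk
    have hsplit : Qb (A k) = Qb (A k ∩ s) + Qb (A k \ s) :=
      (measure_inter_add_diff _ hsm).symm
    have hXset : A k \ s ⊆ A k ∩ {ω | 0 < B ((n : ℝ) * h) ω - B ((k : ℝ) * h) ω} := by
      rintro ω ⟨hω, hns⟩
      refine ⟨hω, ?_⟩
      have h1 : B ((k : ℝ) * h) ω < b := hω.1
      have h2 : b ≤ B ((n : ℝ) * h) ω := not_lt.1 hns
      simp only [mem_setOf_eq]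
      linarith
    -- express A k via history predicate
    set P : (ℕ → ℝ) → Prop := fun y => y k < b ∧ ∀ j < k, b ≤ y j with hP
    have hPA : {ω | P (fun j => B ((min j k : ℕ) * h) ω)} = A k := by
      ext ω
      simp only [hP, hA, mem_setOf_eq, min_self]
      constructor
      · rintro ⟨h1, h2⟩
        refine ⟨h1, fun j hj => ?_⟩
        have := h2 j hj
        rwa [min_eq_left hj.le] at this
      · rintro ⟨h1, h2⟩
        refine ⟨h1, fun j hj => ?_⟩
        rw [min_eq_left hj.le]
        exact h2 j hj
    have hPm : MeasurableSet {y : ℕ → ℝ | P y} := by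
      have he : {y : ℕ → ℝ | P y} = {y : ℕ → ℝ | y k < b}
          ∩ ⋂ j, ⋂ (_ : j < k), {y : ℕ → ℝ | b ≤ y j} := by
        ext y; simp [hP]
      rw [he]
      exact (measurableSet_lt (measurable_pi_apply k) measurable_const).inter
        (MeasurableSet.iInter fun j => MeasurableSet.iInter fun _ =>
          measurableSet_le measurable_const (measurable_pi_apply j))
    have hcore := bm_core ⟨hB.1, hB.2.1, hB.2.2.1, hB.2.2.2.1, hB.2.2.2.2⟩ n k hk hh P hPm 0
    rw [hPA] at hcore
    have hXhalf : Qb {ω | 0 < B ((n : ℝ) * h) ω - B ((k : ℝ) * h) ω} ≤ 1 / 2 := by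
      have hkh : (0 : ℝ) ≤ (k : ℝ) * h := by positivity
      have hkn' : (k : ℝ) * h ≤ (n : ℝ) * h :=
        mul_le_mul_of_nonneg_right (Nat.cast_le.2 hk) hh
      have hlaw := bm_event_law hB hkh hkn' (measurableSet_Ioi (a := (0:ℝ)))
      have : {ω | 0 < B ((n : ℝ) * h) ω - B ((k : ℝ) * h) ω}
          = {ω | B ((n : ℝ) * h) ω - B ((k : ℝ) * h) ω ∈ Ioi 0} := rfl
      rw [this, hlaw]
      exact gauss_Ioi_le_half _
    calc Qb (A k) = Qb (A k ∩ s) + Qb (A k \ s) := hsplit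
      _ ≤ Qb (A k ∩ s) + Qb (A k ∩ {ω | 0 < B ((n : ℝ) * h) ω - B ((k : ℝ) * h) ω}) :=
          add_le_add_right (measure_mono hXset) _
      _ = Qb (A k ∩ s) + Qb (A k) * Qb {ω | 0 < B ((n : ℝ) * h) ω - B ((k : ℝ) * h) ω} := by
          rw [hcore]
      _ ≤ Qb (A k ∩ s) + Qb (A k) * (1 / 2) :=
          add_le_add_right (mul_le_mul_right hXhalf _) _
  -- sum up
  rw [hU]
  rw [measure_biUnion_finset hdisj (fun k _ => hAmeas k)]
  have hsum1 : ∑ k ∈ Finset.range (n + 1), Qb (A k)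
      ≤ ∑ k ∈ Finset.range (n + 1), (Qb (A k ∩ s) + Qb (A k) * (1 / 2)) := by
    refine Finset.sum_le_sum fun k hk => key k (Nat.lt_succ_iff.1 (Finset.mem_range.1 hk))
  rw [Finset.sum_add_distrib, ← Finset.sum_mul] at hsum1
  have hsum2 : ∑ k ∈ Finset.range (n + 1), Qb (A k ∩ s) ≤ Qb s := by
    have hdisj2 : (↑(Finset.range (n + 1)) : Set ℕ).PairwiseDisjoint (fun k => A k ∩ s) :=
      fun i hi j hj hij => (hdisj hi hj hij).mono inter_subset_left inter_subset_left
    rw [← measure_biUnion_finset hdisj2 (fun k _ => (hAmeas k).inter hsm)]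
    exact measure_mono (by simp only [iUnion_subset_iff]; exact fun k _ => inter_subset_right)
  set x := ∑ k ∈ Finset.range (n + 1), Qb (A k) with hx
  have hxy : x ≤ Qb s + x * (1 / 2) := le_trans hsum1 (add_le_add_left hsum2 _)
  have hxfin : x ≠ ⊤ := by
    rw [hx, ← measure_biUnion_finset hdisj (fun k _ => hAmeas k)]
    exact measure_ne_top _ _
  have hxhalf : x / 2 ≤ Qb s := by
    have h1 : x / 2 + x / 2 ≤ Qb s + x / 2 := by
      rw [ENNReal.add_halves]
      simpa [div_eq_mul_inv, one_div] using hxy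
    exact (ENNReal.add_le_add_iff_right
      ((lt_of_le_of_lt ENNReal.half_le_self (lt_top_iff_ne_top.2 hxfin)).ne)).1 h1
  calc x = x / 2 + x / 2 := (ENNReal.add_halves x).symm
    _ ≤ Qb s + Qb s := add_le_add hxhalf hxhalf
    _ = 2 * Qb s := (two_mul _).symm

end UB

section LB
variable {Ω : Type*} [MeasurableSpace Ω] {Qb : Measure Ω} [IsProbabilityMeasure Qb]
  {B : ℝ → Ω → ℝ}

lemma bm_LB (hB : IsStandardBM Qb B) (n m : ℕ) (hmn : m < n) {h : ℝ} (hh : 0 < h)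
    {a : ℝ} (ha : a < 0) {δ : ℝ} (hδ : 0 < δ) :
    Qb {ω | B ((n : ℝ) * h) ω ≤ a}
      + ENNReal.ofReal (1 - stdNormalCDF (δ / Real.sqrt (((n - m : ℕ) : ℝ) * h)))
        * Qb {ω | ∃ k, 1 ≤ k ∧ k ≤ m ∧ B ((k : ℝ) * h) ω ≤ a ∧ a - δ ≤ B ((k : ℝ) * h) ω
            ∧ ∀ j < k, a < B ((j : ℝ) * h) ω}
      ≤ Qb {ω | ∃ k ≤ n, B ((k : ℝ) * h) ω ≤ a} := by
  classical
  have hBm := hB.2.2.1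
  set β : ℝ := 1 - stdNormalCDF (δ / Real.sqrt (((n - m : ℕ) : ℝ) * h)) with hβ
  set A : ℕ → Set Ω := fun k => {ω | B ((k : ℝ) * h) ω ≤ a ∧ a - δ ≤ B ((k : ℝ) * h) ω
    ∧ ∀ j < k, a < B ((j : ℝ) * h) ω} with hA
  set X : ℕ → Set Ω := fun k => {ω | δ < B ((n : ℝ) * h) ω - B ((k : ℝ) * h) ω} with hX
  have hAmeas : ∀ k, MeasurableSet (A k) := by
    intro k
    have h1 : MeasurableSet {ω | B ((k : ℝ) * h) ω ≤ a} :=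
      measurableSet_le (hBm _) measurable_const
    have h2 : MeasurableSet {ω | a - δ ≤ B ((k : ℝ) * h) ω} :=
      measurableSet_le measurable_const (hBm _)
    have h3 : MeasurableSet {ω | ∀ j < k, a < B ((j : ℝ) * h) ω} := by
      have he : {ω | ∀ j < k, a < B ((j : ℝ) * h) ω}
          = ⋂ j, ⋂ (_ : j < k), {ω | a < B ((j : ℝ) * h) ω} := by ext ω; simp
      rw [he]
      exact MeasurableSet.iInter fun j => MeasurableSet.iInter fun _ =>
        measurableSet_lt measurable_const (hBm _)
    exact h1.inter (h2.inter h3)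
  have hXmeas : ∀ k, MeasurableSet (X k) :=
    fun k => measurableSet_lt measurable_const ((hBm _).sub (hBm _))
  have hdisj : (↑(Finset.Icc 1 m) : Set ℕ).PairwiseDisjoint A := by
    intro i _ k _ hik
    rcases hik.lt_or_gt with hlt | hlt
    · exact Set.disjoint_left.2 fun ω hωi hωk => absurd hωi.1 (not_le.2 (hωk.2.2 i hlt))
    · exact Set.disjoint_left.2 fun ω hωi hωk => absurd hωk.1 (not_le.2 (hωi.2.2 k hlt))
  have hE : {ω | ∃ k, 1 ≤ k ∧ k ≤ m ∧ B ((k : ℝ) * h) ω ≤ a ∧ a - δ ≤ B ((k : ℝ) * h) ω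
      ∧ ∀ j < k, a < B ((j : ℝ) * h) ω} = ⋃ k ∈ Finset.Icc 1 m, A k := by
    ext ω
    simp only [mem_setOf_eq, mem_iUnion, Finset.mem_Icc, hA]
    constructor
    · rintro ⟨k, h1, h2, h3⟩; exact ⟨k, ⟨h1, h2⟩, h3⟩
    · rintro ⟨k, ⟨h1, h2⟩, h3⟩; exact ⟨k, h1, h2, h3⟩
  -- independence and gaussian bound for each k
  have hcore : ∀ k, 1 ≤ k → k ≤ m → Qb (A k ∩ X k) = Qb (A k) * Qb (X k) := by
    intro k _ hkm
    set P : (ℕ → ℝ) → Prop := fun y => y k ≤ a ∧ a - δ ≤ y k ∧ ∀ j < k, a < y j with hP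
    have hPA : {ω | P (fun j => B ((min j k : ℕ) * h) ω)} = A k := by
      ext ω
      simp only [hP, hA, mem_setOf_eq, min_self]
      constructor
      · rintro ⟨h1, h2, h3⟩
        refine ⟨h1, h2, fun j hj => ?_⟩
        have := h3 j hj
        rwa [min_eq_left hj.le] at this
      · rintro ⟨h1, h2, h3⟩
        refine ⟨h1, h2, fun j hj => ?_⟩
        rw [min_eq_left hj.le]
        exact h3 j hj
    have hPm : MeasurableSet {y : ℕ → ℝ | P y} := by
      have he : {y : ℕ → ℝ | P y} = {y : ℕ → ℝ | y k ≤ a}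
          ∩ ({y : ℕ → ℝ | a - δ ≤ y k}
          ∩ ⋂ j, ⋂ (_ : j < k), {y : ℕ → ℝ | a < y j}) := by
        ext y; simp [hP]
      rw [he]
      exact (measurableSet_le (measurable_pi_apply k) measurable_const).inter
        ((measurableSet_le measurable_const (measurable_pi_apply k)).inter
        (MeasurableSet.iInter fun j => MeasurableSet.iInter fun _ =>
          measurableSet_lt measurable_const (measurable_pi_apply j)))
    have := bm_core hB n k (le_trans hkm hmn.le) hh.le P hPm δ
    rw [hPA] at this
    exact this
  have hXlb : ∀ k, 1 ≤ k → k ≤ m → ENNReal.ofReal β ≤ Qb (X k) := by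
    intro k _ hkm
    have hkn : k ≤ n := le_trans hkm hmn.le
    have hkh : (0 : ℝ) ≤ (k : ℝ) * h := by positivity
    have hkn' : (k : ℝ) * h ≤ (n : ℝ) * h :=
      mul_le_mul_of_nonneg_right (Nat.cast_le.2 hkn) hh.le
    have hlaw := bm_event_law hB hkh hkn' (measurableSet_Ioi (a := δ))
    have hXeq : X k = {ω | B ((n : ℝ) * h) ω - B ((k : ℝ) * h) ω ∈ Ioi δ} := rfl
    have hv : (n : ℝ) * h - (k : ℝ) * h = ((n - k : ℕ) : ℝ) * h := by
      rw [Nat.cast_sub hkn]; ring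
    have hvpos : (0 : ℝ) < ((n - k : ℕ) : ℝ) * h := by
      have : 0 < n - k := Nat.sub_pos_of_lt (lt_of_le_of_lt hkm hmn)
      positivity
    have hw0pos : (0 : ℝ) < ((n - m : ℕ) : ℝ) * h := by
      have : 0 < n - m := Nat.sub_pos_of_lt hmn
      positivity
    have htoReal : (Qb (X k)).toReal = 1 - stdNormalCDF (δ / Real.sqrt (((n - k : ℕ) : ℝ) * h)) := by
      rw [hXeq, hlaw, hv]
      exact gauss_Ioi_eq hvpos δ
    have hmono : β ≤ (Qb (X k)).toReal := by
      rw [htoReal, hβ]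
      have hsq : Real.sqrt (((n - m : ℕ) : ℝ) * h) ≤ Real.sqrt (((n - k : ℕ) : ℝ) * h) := by
        apply Real.sqrt_le_sqrt
        have : (n - m : ℕ) ≤ (n - k : ℕ) := Nat.sub_le_sub_left hkm n
        exact mul_le_mul_of_nonneg_right (Nat.cast_le.2 this) hh.le
      have hdiv : δ / Real.sqrt (((n - k : ℕ) : ℝ) * h)
          ≤ δ / Real.sqrt (((n - m : ℕ) : ℝ) * h) :=
        div_le_div_of_nonneg_left hδ.le (Real.sqrt_pos.2 hw0pos) hsq
      have := sNC_mono hdiv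
      linarith
    calc ENNReal.ofReal β ≤ ENNReal.ofReal (Qb (X k)).toReal := ENNReal.ofReal_le_ofReal hmono
      _ = Qb (X k) := ENNReal.ofReal_toReal (measure_ne_top _ _)
  -- disjoint union inside target
  set D0 : Set Ω := {ω | B ((n : ℝ) * h) ω ≤ a} with hD0
  have hD0m : MeasurableSet D0 := measurableSet_le (hBm _) measurable_const
  have hDk_sub : ∀ k, 1 ≤ k → k ≤ m → A k ∩ X k ⊆ {ω | a < B ((n : ℝ) * h) ω} := by
    rintro k _ _ ω ⟨hωA, hωX⟩
    have h1 : a - δ ≤ B ((k : ℝ) * h) ω := hωA.2.1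
    have h2 : δ < B ((n : ℝ) * h) ω - B ((k : ℝ) * h) ω := hωX
    simp only [mem_setOf_eq]
    linarith
  have hdisj2 : (↑(Finset.Icc 1 m) : Set ℕ).PairwiseDisjoint (fun k => A k ∩ X k) :=
    fun i hi j hj hij => (hdisj hi hj hij).mono inter_subset_left inter_subset_left
  have hDunion : Qb (⋃ k ∈ Finset.Icc 1 m, (A k ∩ X k))
      = ∑ k ∈ Finset.Icc 1 m, Qb (A k ∩ X k) :=
    measure_biUnion_finset hdisj2 (fun k _ => (hAmeas k).inter (hXmeas k))
  have hD0disj : Disjoint D0 (⋃ k ∈ Finset.Icc 1 m, (A k ∩ X k)) := by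
    rw [Set.disjoint_left]
    intro ω hω0 hωU
    simp only [mem_iUnion, Finset.mem_Icc] at hωU
    obtain ⟨k, ⟨hk1, hk2⟩, hωk⟩ := hωU
    exact absurd (hDk_sub k hk1 hk2 hωk) (by simp only [mem_setOf_eq, not_lt]; exact hω0)
  have hsub : D0 ∪ (⋃ k ∈ Finset.Icc 1 m, (A k ∩ X k))
      ⊆ {ω | ∃ k ≤ n, B ((k : ℝ) * h) ω ≤ a} := by
    rintro ω (hω | hω)
    · exact ⟨n, le_rfl, hω⟩
    · simp only [mem_iUnion, Finset.mem_Icc] at hω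
      obtain ⟨k, ⟨hk1, hk2⟩, hωk⟩ := hω
      exact ⟨k, le_trans hk2 hmn.le, hωk.1.1⟩
  have hmain : Qb D0 + ∑ k ∈ Finset.Icc 1 m, Qb (A k ∩ X k)
      ≤ Qb {ω | ∃ k ≤ n, B ((k : ℝ) * h) ω ≤ a} := by
    rw [← hDunion, ← measure_union hD0disj
      (Finset.measurableSet_biUnion _ fun k _ => (hAmeas k).inter (hXmeas k))]
    exact measure_mono hsub
  refine le_trans ?_ hmain
  refine add_le_add_right ?_ _
  rw [hE, measure_biUnion_finset hdisj (fun k _ => hAmeas k), Finset.mul_sum]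
  refine Finset.sum_le_sum fun k hk => ?_
  obtain ⟨hk1, hk2⟩ := Finset.mem_Icc.1 hk
  rw [hcore k hk1 hk2, mul_comm (Qb (A k))]
  exact mul_le_mul_left (hXlb k hk1 hk2) _

end LB

section FU
variable {Ω : Type*} [MeasurableSpace Ω] {Qb : Measure Ω} [IsProbabilityMeasure Qb]
  {B : ℝ → Ω → ℝ}

lemma bm_Iic_eq (hB : IsStandardBM Qb B) {t : ℝ} (ht : 0 < t) (x : ℝ) :
    Qb {ω | B t ω ≤ x} = ENNReal.ofReal (stdNormalCDF (x / Real.sqrt t)) := by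
  have he : {ω | B t ω ≤ x} = {ω | B t ω - B 0 ω ∈ Iic x} := by
    ext ω; simp [hB.1 ω]
  rw [he, bm_event_law hB le_rfl ht.le measurableSet_Iic, sub_zero]
  rw [← gauss_Iic_eq ht x]
  exact (ENNReal.ofReal_toReal (measure_ne_top _ _)).symm

lemma F_upper (hB : IsStandardBM Qb B) {c : ℝ} (hc : 0 < c) {b : ℝ} (hb : b < 0) :
    (Qb {ω | ∃ u ∈ Icc (0 : ℝ) c, B u ω ≤ b}).toReal
      ≤ 2 * stdNormalCDF (b / Real.sqrt c) := by
  have hBm := hB.2.2.1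
  have hstep : ∀ ε : ℝ, 0 < ε →
      (Qb {ω | ∃ u ∈ Icc (0 : ℝ) c, B u ω ≤ b}).toReal
        ≤ 2 * stdNormalCDF ((b + ε) / Real.sqrt c) := by
    intro ε hε
    set D : ℕ → Set Ω :=
      fun j => {ω | ∃ k : ℕ, k ≤ 2 ^ j ∧ B ((k : ℝ) * (c / 2 ^ j)) ω < b + ε} with hD
    have hDstep : ∀ j, D j ⊆ D (j + 1) := by
      rintro j ω ⟨k, hk, hωk⟩
      refine ⟨2 * k, ?_, ?_⟩
      · calc 2 * k ≤ 2 * 2 ^ j := by omega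
          _ = 2 ^ (j + 1) := (pow_succ' 2 j).symm
      · have harg : ((2 * k : ℕ) : ℝ) * (c / 2 ^ (j + 1)) = (k : ℝ) * (c / 2 ^ j) := by
          push_cast
          rw [pow_succ]
          field_simp
        rw [harg]
        exact hωk
    have hDmono : Monotone D := monotone_nat_of_le_succ hDstep
    have hsub : {ω | ∃ u ∈ Icc (0 : ℝ) c, B u ω ≤ b} ⊆ ⋃ j, D j := by
      rintro ω ⟨u, ⟨hu0, huc⟩, hub⟩
      have hcont : Continuous fun t => B t ω := hB.2.1 ω
      have hopen : IsOpen ((fun t => B t ω) ⁻¹' Iio (b + ε)) :=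
        isOpen_Iio.preimage hcont
      have humem : u ∈ (fun t => B t ω) ⁻¹' Iio (b + ε) := by
        simp only [mem_preimage, mem_Iio]
        linarith
      obtain ⟨η, hη, hball⟩ := Metric.isOpen_iff.1 hopen u humem
      obtain ⟨j, hj⟩ := pow_unbounded_of_one_lt (c / η) (one_lt_two (α := ℝ))
      have hhj : 0 < c / 2 ^ j := by positivity
      have hhη : c / 2 ^ j < η := by
        rw [div_lt_iff₀ (by positivity)]
        rw [div_lt_iff₀ hη] at hj
        linarith [hj]
      set k := ⌊u / (c / 2 ^ j)⌋₊ with hk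
      have hkle : (k : ℝ) * (c / 2 ^ j) ≤ u := by
        rw [← le_div_iff₀ hhj]
        exact Nat.floor_le (by positivity)
      have hklt : u < ((k : ℝ) + 1) * (c / 2 ^ j) := by
        rw [← div_lt_iff₀ hhj]
        exact Nat.lt_floor_add_one _
      have hkmem : (k : ℝ) * (c / 2 ^ j) ∈ Metric.ball u η := by
        rw [Metric.mem_ball, Real.dist_eq, abs_sub_lt_iff]
        constructor <;> nlinarith
      have hkub : k ≤ 2 ^ j := by
        have h1 : (k : ℝ) ≤ u / (c / 2 ^ j) := Nat.floor_le (by positivity)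
        have h2 : u / (c / 2 ^ j) ≤ (2 : ℝ) ^ j := by
          rw [div_le_iff₀ hhj]
          calc u ≤ c := huc
            _ = (2 : ℝ) ^ j * (c / 2 ^ j) := by field_simp
        have : (k : ℝ) ≤ ((2 ^ j : ℕ) : ℝ) := by push_cast; linarith
        exact_mod_cast this
      exact mem_iUnion.2 ⟨j, k, hkub, hball hkmem⟩
    by_cases hbe : b + ε < 0
    swap
    · -- trivial case: bound by 1
      have h1 : (Qb {ω | ∃ u ∈ Icc (0 : ℝ) c, B u ω ≤ b}).toReal ≤ 1 := by
        rw [← ENNReal.toReal_one]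
        exact ENNReal.toReal_mono (by norm_num) prob_le_one
      have h2 : (1 : ℝ) ≤ 2 * stdNormalCDF ((b + ε) / Real.sqrt c) := by
        have hge : (0 : ℝ) ≤ (b + ε) / Real.sqrt c := by
          apply div_nonneg (by linarith) (Real.sqrt_nonneg c)
        have := sNC_mono hge
        rw [sNC_zero] at this
        linarith
      linarith
    have hDb : ∀ j, Qb (D j) ≤ 2 * ENNReal.ofReal (stdNormalCDF ((b + ε) / Real.sqrt c)) := by
      intro j
      have hub := bm_UB hB (2 ^ j) (le_of_lt (by positivity : (0:ℝ) < c / 2 ^ j))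
        (b := b + ε) hbe
      refine le_trans hub ?_
      have harg : ((2 ^ j : ℕ) : ℝ) * (c / 2 ^ j) = c := by push_cast; field_simp
      rw [harg]
      refine mul_le_mul_right ?_ 2
      refine le_trans (measure_mono ?_) (bm_Iic_eq hB hc (b + ε)).le
      intro ω hω
      simp only [mem_setOf_eq] at hω ⊢
      exact le_of_lt hω
    have hchain : Qb {ω | ∃ u ∈ Icc (0 : ℝ) c, B u ω ≤ b}
        ≤ 2 * ENNReal.ofReal (stdNormalCDF ((b + ε) / Real.sqrt c)) := by
      refine le_trans (measure_mono hsub) ?_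
      rw [hDmono.measure_iUnion]
      exact iSup_le hDb
    have := ENNReal.toReal_mono (by
      refine ENNReal.mul_ne_top (by norm_num) ENNReal.ofReal_ne_top) hchain
    rw [ENNReal.toReal_mul, ENNReal.toReal_ofReal (sNC_nonneg _)] at this
    simpa using this
  -- let ε → 0
  refine le_of_forall_pos_le_add fun ε' hε' => ?_
  set K := (Real.sqrt (2 * Real.pi))⁻¹ with hK
  have hKpos : 0 < K := by
    rw [hK]
    exact inv_pos.2 (Real.sqrt_pos.2 (by positivity))
  have hscpos : 0 < Real.sqrt c := Real.sqrt_pos.2 hc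
  set ε := ε' * Real.sqrt c / (2 * K) with hε
  have hεpos : 0 < ε := by positivity
  refine le_trans (hstep ε hεpos) ?_
  have hlip := sNC_lipschitz (x := (b + ε) / Real.sqrt c) (y := b / Real.sqrt c)
    (by rw [div_le_div_iff₀ hscpos hscpos]; nlinarith)
  have harg : (b + ε) / Real.sqrt c - b / Real.sqrt c = ε / Real.sqrt c := by ring
  rw [harg] at hlip
  have : ε / Real.sqrt c * K = ε' / 2 := by
    rw [hε]
    field_simp
  nlinarith [hlip, this]

end FU

open scoped Topology

section FL
variable {Ω : Type*} [MeasurableSpace Ω] {Qb : Measure Ω} [IsProbabilityMeasure Qb]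
  {B : ℝ → Ω → ℝ}

lemma F_lower_step (hB : IsStandardBM Qb B) {c b : ℝ} (hc : 0 < c) (hb : b < 0) :
    stdNormalCDF (b / Real.sqrt c)
      + (Qb {ω | ∃ u ∈ Icc (0 : ℝ) c, B u ω < b}).toReal / 2
      ≤ (Qb {ω | ∃ u ∈ Icc (0 : ℝ) c, B u ω ≤ b}).toReal := by
  have hBm := hB.2.2.1
  set Fev : Set Ω := {ω | ∃ u ∈ Icc (0 : ℝ) c, B u ω ≤ b} with hFev
  set Gp : ℕ → Set Ω :=
    fun p => {ω | ∃ u ∈ Icc (0 : ℝ) (c - 2 * (c / 2 ^ p)), B u ω < b} with hGp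
  -- Step A : ENNReal inequality for fixed p, δ
  have claimA : ∀ (p : ℕ) (δ : ℝ), 0 < δ →
      Qb {ω | B c ω ≤ b}
        + ENNReal.ofReal (1 - stdNormalCDF (δ / Real.sqrt (c / 2 ^ p))) * Qb (Gp p)
        ≤ Qb Fev := by
    intro p δ hδ
    set ρ : ℝ := c / 2 ^ p with hρ
    have hρpos : 0 < ρ := by positivity
    set E : ℕ → Set Ω := fun j =>
      {ω | ∃ k : ℕ, 1 ≤ k ∧ k ≤ 2 ^ (p + j) - 2 ^ j
        ∧ B ((k : ℝ) * (c / 2 ^ (p + j))) ω ≤ b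
        ∧ b - δ ≤ B ((k : ℝ) * (c / 2 ^ (p + j))) ω
        ∧ ∀ i < k, b < B ((i : ℝ) * (c / 2 ^ (p + j))) ω} with hE
    have hpow_le : ∀ j : ℕ, (2 : ℕ) ^ j ≤ 2 ^ (p + j) :=
      fun j => Nat.pow_le_pow_right (by norm_num) (by omega)
    have hsub_eq : ∀ j : ℕ, (2 ^ (p + j) - (2 ^ (p + j) - 2 ^ j) : ℕ) = 2 ^ j :=
      fun j => Nat.sub_sub_self (hpow_le j)
    have harg2 : ∀ j : ℕ, ((2 ^ j : ℕ) : ℝ) * (c / 2 ^ (p + j)) = ρ := by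
      intro j
      rw [hρ]
      push_cast
      rw [pow_add]
      field_simp
    have hargc : ∀ j : ℕ, ((2 ^ (p + j) : ℕ) : ℝ) * (c / 2 ^ (p + j)) = c := by
      intro j
      push_cast
      field_simp
    have hmlt : ∀ j : ℕ, (2 ^ (p + j) - 2 ^ j : ℕ) < 2 ^ (p + j) := by
      intro j
      have h1 : 0 < (2 : ℕ) ^ j := by positivity
      have h2 : 0 < (2 : ℕ) ^ (p + j) := by positivity
      omega
    have hmreal : ∀ j : ℕ, ((2 ^ (p + j) - 2 ^ j : ℕ) : ℝ) * (c / 2 ^ (p + j)) = c - ρ := by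
      intro j
      rw [Nat.cast_sub (hpow_le j), sub_mul, hargc j, harg2 j]
    -- per-j inequality from bm_LB
    have perj : ∀ j : ℕ,
        Qb {ω | B c ω ≤ b}
          + ENNReal.ofReal (1 - stdNormalCDF (δ / Real.sqrt ρ)) * Qb (E j)
          ≤ Qb Fev := by
      intro j
      simp only [hE]
      have hlb := bm_LB hB (2 ^ (p + j)) (2 ^ (p + j) - 2 ^ j) (hmlt j)
        (h := c / 2 ^ (p + j)) (by positivity) (a := b) hb hδ
      rw [hsub_eq j] at hlb
      rw [show (((2 ^ (p + j) : ℕ)) : ℝ) * (c / 2 ^ (p + j)) = c from hargc j] at hlb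
      rw [show ((2 ^ j : ℕ) : ℝ) * (c / 2 ^ (p + j)) = ρ from harg2 j] at hlb
      refine le_trans hlb (measure_mono ?_)
      rintro ω ⟨k, hk, hωk⟩
      simp only [hFev, mem_setOf_eq]
      refine ⟨(k : ℝ) * (c / 2 ^ (p + j)), ⟨by positivity, ?_⟩, hωk⟩
      calc (k : ℝ) * (c / 2 ^ (p + j))
          ≤ ((2 ^ (p + j) : ℕ) : ℝ) * (c / 2 ^ (p + j)) := by
            apply mul_le_mul_of_nonneg_right _ (by positivity)
            exact_mod_cast hk
        _ = c := hargc j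
    -- pathwise claim
    have claimPath : ∀ ω ∈ Gp p, ∃ J : ℕ, ∀ j, J ≤ j → ω ∈ E j := by
      rintro ω ⟨u, ⟨hu0, huc⟩, hub⟩
      have hcont : Continuous fun t => B t ω := hB.2.1 ω
      -- continuity at u
      have hopen : IsOpen ((fun t => B t ω) ⁻¹' Iio b) := isOpen_Iio.preimage hcont
      obtain ⟨η₂, hη₂, hball⟩ := Metric.isOpen_iff.1 hopen u hub
      -- uniform continuity on [0, c]
      have hucont := (isCompact_Icc (a := (0 : ℝ)) (b := c)).uniformContinuousOn_of_continuous
        hcont.continuousOn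
      rw [Metric.uniformContinuousOn_iff] at hucont
      obtain ⟨η₁, hη₁, hUC⟩ := hucont δ hδ
      set η := min η₁ (min η₂ ρ) with hη
      have hηpos : 0 < η := by
        apply lt_min hη₁ (lt_min hη₂ hρpos)
      obtain ⟨J, hJ⟩ := pow_unbounded_of_one_lt (c / η) (one_lt_two (α := ℝ))
      refine ⟨J, fun j hj => ?_⟩
      set h : ℝ := c / 2 ^ (p + j) with hh
      have hhpos : 0 < h := by positivity
      have hhlt : h < η := by
        rw [hh, div_lt_iff₀ (by positivity)]
        rw [div_lt_iff₀ hηpos] at hJ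
        have hle : (2 : ℝ) ^ J ≤ 2 ^ (p + j) :=
          pow_le_pow_right₀ one_le_two (by omega)
        nlinarith
      have hhη₁ : h < η₁ := lt_of_lt_of_le hhlt (min_le_left _ _)
      have hhη₂ : h < η₂ := lt_of_lt_of_le hhlt (le_trans (min_le_right _ _) (min_le_left _ _))
      have hhρ : h < ρ := lt_of_lt_of_le hhlt (le_trans (min_le_right _ _) (min_le_right _ _))
      set k₁ := ⌊u / h⌋₊ with hk₁
      have hk₁le : (k₁ : ℝ) * h ≤ u := by
        rw [← le_div_iff₀ hhpos]
        exact Nat.floor_le (by positivity)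
      have hk₁lt : u < ((k₁ : ℝ) + 1) * h := by
        rw [← div_lt_iff₀ hhpos]
        exact Nat.lt_floor_add_one _
      have hBk₁ : B ((k₁ : ℝ) * h) ω < b := by
        have : (k₁ : ℝ) * h ∈ Metric.ball u η₂ := by
          rw [Metric.mem_ball, Real.dist_eq, abs_sub_lt_iff]
          constructor <;> nlinarith
        exact hball this
      have hk₁m : k₁ ≤ 2 ^ (p + j) - 2 ^ j := by
        have h1 : (k₁ : ℝ) * h < ((2 ^ (p + j) - 2 ^ j : ℕ) : ℝ) * h := by
          rw [show ((2 ^ (p + j) - 2 ^ j : ℕ) : ℝ) * h = c - ρ from hmreal j]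
          calc (k₁ : ℝ) * h ≤ u := hk₁le
            _ ≤ c - 2 * ρ := huc
            _ < c - ρ := by linarith
        have h2 : (k₁ : ℝ) < ((2 ^ (p + j) - 2 ^ j : ℕ) : ℝ) :=
          lt_of_mul_lt_mul_right h1 hhpos.le
        exact le_of_lt (by exact_mod_cast h2)
      have hex : ∃ k : ℕ, B ((k : ℝ) * h) ω ≤ b := ⟨k₁, hBk₁.le⟩
      set k₀ := Nat.find hex with hk₀
      have hspec : B ((k₀ : ℝ) * h) ω ≤ b := Nat.find_spec hex
      have hprev : ∀ i < k₀, b < B ((i : ℝ) * h) ω :=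
        fun i hi => lt_of_not_ge (Nat.find_min hex hi)
      have hk₀1 : 1 ≤ k₀ := by
        by_contra hcon
        push_neg at hcon
        interval_cases k₀
        · rw [Nat.cast_zero, zero_mul, hB.1 ω] at hspec
          linarith
      have hk₀m : k₀ ≤ 2 ^ (p + j) - 2 ^ j := le_trans (Nat.find_min' hex hBk₁.le) hk₁m
      have hk₀c : (k₀ : ℝ) * h ≤ c := by
        calc (k₀ : ℝ) * h ≤ ((2 ^ (p + j) - 2 ^ j : ℕ) : ℝ) * h :=
              mul_le_mul_of_nonneg_right (by exact_mod_cast hk₀m) hhpos.le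
          _ = c - ρ := hmreal j
          _ ≤ c := by linarith
      have hlow : b - δ ≤ B ((k₀ : ℝ) * h) ω := by
        have hi : k₀ - 1 < k₀ := by omega
        have hbi : b < B (((k₀ - 1 : ℕ) : ℝ) * h) ω := hprev _ hi
        have hcast : ((k₀ - 1 : ℕ) : ℝ) = (k₀ : ℝ) - 1 := by
          rw [Nat.cast_sub hk₀1]; norm_num
        have hmem1 : (k₀ : ℝ) * h ∈ Icc (0 : ℝ) c := ⟨by positivity, hk₀c⟩
        have hmem2 : ((k₀ - 1 : ℕ) : ℝ) * h ∈ Icc (0 : ℝ) c := by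
          constructor
          · positivity
          · calc ((k₀ - 1 : ℕ) : ℝ) * h ≤ (k₀ : ℝ) * h :=
                mul_le_mul_of_nonneg_right (by exact_mod_cast Nat.sub_le k₀ 1) hhpos.le
              _ ≤ c := hk₀c
        have hdist : dist ((k₀ : ℝ) * h) (((k₀ - 1 : ℕ) : ℝ) * h) < η₁ := by
          rw [Real.dist_eq, hcast]
          rw [show (k₀ : ℝ) * h - ((k₀ : ℝ) - 1) * h = h by ring]
          rw [abs_of_pos hhpos]
          exact hhη₁
        have := hUC _ hmem1 _ hmem2 hdist
        rw [Real.dist_eq, abs_sub_lt_iff] at this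
        have h2 := this.2
        linarith
      simp only [hE, mem_setOf_eq]
      exact ⟨k₀, hk₀1, hk₀m, hspec, hlow, hprev⟩
    -- measure chain via liminf
    have hEmeas : ∀ j, MeasurableSet (E j) := by
      intro j
      have he : E j = ⋃ k : ℕ, ⋃ (_ : 1 ≤ k ∧ k ≤ 2 ^ (p + j) - 2 ^ j),
          ({ω | B ((k : ℝ) * (c / 2 ^ (p + j))) ω ≤ b}
            ∩ ({ω | b - δ ≤ B ((k : ℝ) * (c / 2 ^ (p + j))) ω}
            ∩ ⋂ i, ⋂ (_ : i < k), {ω | b < B ((i : ℝ) * (c / 2 ^ (p + j))) ω})) := by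
        ext ω
        simp only [hE, mem_setOf_eq, mem_iUnion, mem_inter_iff, mem_iInter]
        constructor
        · rintro ⟨k, h1, h2, h3, h4, h5⟩; exact ⟨k, ⟨h1, h2⟩, h3, h4, h5⟩
        · rintro ⟨k, ⟨h1, h2⟩, h3, h4, h5⟩; exact ⟨k, h1, h2, h3, h4, h5⟩
      rw [he]
      refine MeasurableSet.iUnion fun k => MeasurableSet.iUnion fun _ => ?_
      exact (measurableSet_le (hBm _) measurable_const).inter
        ((measurableSet_le measurable_const (hBm _)).inter
          (MeasurableSet.iInter fun i => MeasurableSet.iInter fun _ =>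
            measurableSet_lt measurable_const (hBm _)))
    set I : ℕ → Set Ω := fun J => ⋂ j, ⋂ (_ : J ≤ j), E j with hI
    have hImono : Monotone I := by
      intro J J' hJJ ω hω
      simp only [hI, mem_iInter] at hω ⊢
      exact fun j hj => hω j (le_trans hJJ hj)
    have hGsub : Gp p ⊆ ⋃ J, I J := by
      intro ω hω
      obtain ⟨J, hJ⟩ := claimPath ω hω
      simp only [mem_iUnion, hI, mem_iInter]
      exact ⟨J, hJ⟩
    have hQG : Qb (Gp p) ≤ ⨆ J, Qb (I J) := by
      refine le_trans (measure_mono hGsub) ?_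
      rw [hImono.measure_iUnion]
    calc Qb {ω | B c ω ≤ b}
        + ENNReal.ofReal (1 - stdNormalCDF (δ / Real.sqrt ρ)) * Qb (Gp p)
        ≤ Qb {ω | B c ω ≤ b}
          + ENNReal.ofReal (1 - stdNormalCDF (δ / Real.sqrt ρ)) * ⨆ J, Qb (I J) :=
          add_le_add_right (mul_le_mul_right hQG _) _
      _ = ⨆ J, (Qb {ω | B c ω ≤ b}
          + ENNReal.ofReal (1 - stdNormalCDF (δ / Real.sqrt ρ)) * Qb (I J)) := by
          rw [ENNReal.mul_iSup, ENNReal.add_iSup]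
      _ ≤ Qb Fev := by
          refine iSup_le fun J => ?_
          refine le_trans ?_ (perj J)
          refine add_le_add_right (mul_le_mul_right (measure_mono ?_) _) _
          intro ω hω
          simp only [hI, mem_iInter] at hω
          exact hω J le_rfl
  -- Step B : real inequality for fixed p
  have hQFev_ne : Qb Fev ≠ ⊤ := measure_ne_top _ _
  have claimB : ∀ p : ℕ,
      stdNormalCDF (b / Real.sqrt c) + (Qb (Gp p)).toReal / 2 ≤ (Qb Fev).toReal := by
    intro p
    set Grp := (Qb (Gp p)).toReal with hGrp
    have hGrp0 : 0 ≤ Grp := ENNReal.toReal_nonneg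
    have hρpos : (0 : ℝ) < c / 2 ^ p := by positivity
    have hsρ : 0 < Real.sqrt (c / 2 ^ p) := Real.sqrt_pos.2 hρpos
    have hreal : ∀ δ : ℝ, 0 < δ →
        stdNormalCDF (b / Real.sqrt c)
          + (1 - stdNormalCDF (δ / Real.sqrt (c / 2 ^ p))) * Grp ≤ (Qb Fev).toReal := by
      intro δ hδ
      have hA := claimA p δ hδ
      rw [bm_Iic_eq hB hc b] at hA
      have hnonneg : 0 ≤ 1 - stdNormalCDF (δ / Real.sqrt (c / 2 ^ p)) := by
        linarith [sNC_le_one (δ / Real.sqrt (c / 2 ^ p))]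
      have hmono := ENNReal.toReal_mono hQFev_ne hA
      rwa [ENNReal.toReal_add ENNReal.ofReal_ne_top
        (ENNReal.mul_ne_top ENNReal.ofReal_ne_top (measure_ne_top _ _)),
        ENNReal.toReal_mul, ENNReal.toReal_ofReal (sNC_nonneg _),
        ENNReal.toReal_ofReal hnonneg] at hmono
    refine le_of_forall_pos_le_add fun ε hε => ?_
    have hKpos : 0 < (Real.sqrt (2 * Real.pi))⁻¹ :=
      inv_pos.2 (Real.sqrt_pos.2 (by positivity))
    set δ := ε * Real.sqrt (c / 2 ^ p) / ((Real.sqrt (2 * Real.pi))⁻¹ * (Grp + 1)) with hδdef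
    have hδpos : 0 < δ := by positivity
    have h2 := hreal δ hδpos
    have hlip := sNC_lipschitz (x := δ / Real.sqrt (c / 2 ^ p)) (y := 0) (by positivity)
    rw [sNC_zero, sub_zero] at hlip
    have hq : δ / Real.sqrt (c / 2 ^ p)
        = ε / ((Real.sqrt (2 * Real.pi))⁻¹ * (Grp + 1)) := by
      rw [hδdef]
      field_simp
    have h3 : δ / Real.sqrt (c / 2 ^ p) * (Real.sqrt (2 * Real.pi))⁻¹ * Grp ≤ ε := by
      rw [hq, div_mul_eq_mul_div, div_mul_eq_mul_div, div_le_iff₀ (by positivity)]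
      nlinarith
    nlinarith [h2, hlip, h3, hGrp0]
  -- Step C : p → ∞
  have hGmono : Monotone Gp := by
    intro p q hpq ω hω
    obtain ⟨u, ⟨hu0, huc⟩, hub⟩ := hω
    refine ⟨u, ⟨hu0, ?_⟩, hub⟩
    have h1 : (2 : ℝ) ^ p ≤ 2 ^ q := pow_le_pow_right₀ one_le_two hpq
    have h2 : c / 2 ^ q ≤ c / 2 ^ p :=
      div_le_div_of_nonneg_left hc.le (by positivity) h1
    linarith
  have hmain : ∀ ω, ∀ u', 0 ≤ u' → u' < c → B u' ω < b → ∃ p : ℕ, ω ∈ Gp p := by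
    intro ω u' hu0 huc hub
    obtain ⟨p, hp⟩ := pow_unbounded_of_one_lt (2 * c / (c - u')) (one_lt_two (α := ℝ))
    refine ⟨p, u', ⟨hu0, ?_⟩, hub⟩
    have h2p : (0 : ℝ) < 2 ^ p := by positivity
    have h2' : 2 * (c / 2 ^ p) < c - u' := by
      rw [show 2 * (c / 2 ^ p) = 2 * c / 2 ^ p by ring, div_lt_iff₀ h2p]
      rw [div_lt_iff₀ (by linarith : (0 : ℝ) < c - u')] at hp
      nlinarith
    linarith
  have hGU : ⋃ p, Gp p = {ω | ∃ u ∈ Icc (0 : ℝ) c, B u ω < b} := by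
    ext ω
    simp only [mem_iUnion]
    constructor
    · rintro ⟨p, u, ⟨hu0, huc⟩, hub⟩
      refine ⟨u, ⟨hu0, ?_⟩, hub⟩
      have : 0 < c / 2 ^ p := by positivity
      linarith
    · rintro ⟨u, ⟨hu0, huc⟩, hub⟩
      by_cases hucase : u < c
      · exact hmain ω u hu0 hucase hub
      · have huc' : u = c := le_antisymm huc (not_lt.1 hucase)
        have hcont : Continuous fun t => B t ω := hB.2.1 ω
        have hopen : IsOpen ((fun t => B t ω) ⁻¹' Iio b) := isOpen_Iio.preimage hcont
        obtain ⟨η, hη, hball⟩ := Metric.isOpen_iff.1 hopen u hub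
        set u' := u - min (η / 2) (c / 2) with hu'
        have hmin : 0 < min (η / 2) (c / 2) := lt_min (by linarith) (by linarith)
        have hu'0 : 0 ≤ u' := by
          rw [hu', huc']
          have : min (η / 2) (c / 2) ≤ c / 2 := min_le_right _ _
          linarith
        have hu'c : u' < c := by
          rw [hu', huc']
          linarith
        have hu'b : B u' ω < b := by
          apply hball
          rw [Metric.mem_ball, Real.dist_eq, hu']
          rw [show u - min (η / 2) (c / 2) - u = -(min (η / 2) (c / 2)) by ring, abs_neg,
            abs_of_pos hmin]
          have : min (η / 2) (c / 2) ≤ η / 2 := min_le_left _ _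
          linarith
        exact hmain ω u' hu'0 hu'c hu'b
  have htendmeas : Tendsto (fun p => Qb (Gp p)) atTop
      (𝓝 (Qb {ω | ∃ u ∈ Icc (0 : ℝ) c, B u ω < b})) := by
    rw [← hGU]
    exact tendsto_measure_iUnion_atTop hGmono
  have htend : Tendsto
      (fun p => stdNormalCDF (b / Real.sqrt c) + (Qb (Gp p)).toReal / 2) atTop
      (𝓝 (stdNormalCDF (b / Real.sqrt c)
        + (Qb {ω | ∃ u ∈ Icc (0 : ℝ) c, B u ω < b}).toReal / 2)) := by
    apply Tendsto.const_add
    apply Tendsto.div_const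
    exact (ENNReal.tendsto_toReal (measure_ne_top _ _)).comp htendmeas
  exact le_of_tendsto htend (Filter.Eventually.of_forall claimB)

end FL

section GLow
open scoped Topology
variable {Ω : Type*} [MeasurableSpace Ω] {Qb : Measure Ω} [IsProbabilityMeasure Qb]
  {B : ℝ → Ω → ℝ}

lemma G_lower (hB : IsStandardBM Qb B) {c b : ℝ} (hc : 0 < c) (hb : b < 0) :
    2 * stdNormalCDF (b / Real.sqrt c)
      ≤ (Qb {ω | ∃ u ∈ Icc (0 : ℝ) c, B u ω < b}).toReal := by
  set Gev : ℝ → Set Ω := fun b' => {ω | ∃ u ∈ Icc (0 : ℝ) c, B u ω < b'} with hGev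
  have hmono : Monotone (fun i : ℕ => Gev (b - 1 / (i + 1))) := by
    intro i j hij ω hω
    obtain ⟨u, hu, hub⟩ := hω
    refine ⟨u, hu, lt_of_lt_of_le hub ?_⟩
    have h1 : (1 : ℝ) / (j + 1) ≤ 1 / (i + 1) := by
      apply div_le_div_of_nonneg_left one_pos.le (by positivity)
      exact_mod_cast by omega
    linarith
  have hU : ⋃ i : ℕ, Gev (b - 1 / (i + 1)) = Gev b := by
    ext ω
    simp only [mem_iUnion]
    constructor
    · rintro ⟨i, u, hu, hub⟩
      refine ⟨u, hu, ?_⟩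
      have : 0 < (1 : ℝ) / (i + 1) := by positivity
      linarith
    · rintro ⟨u, hu, hub⟩
      obtain ⟨i, hi⟩ := exists_nat_one_div_lt (show (0 : ℝ) < b - B u ω by linarith)
      refine ⟨i, u, hu, ?_⟩
      linarith
  have htm : Tendsto (fun i : ℕ => (Qb (Gev (b - 1 / (i + 1)))).toReal) atTop
      (𝓝 ((Qb (Gev b)).toReal)) := by
    have h1 := tendsto_measure_iUnion_atTop (μ := Qb) hmono
    rw [hU] at h1
    exact (ENNReal.tendsto_toReal (measure_ne_top _ _)).comp h1
  have hstep : ∀ i : ℕ,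
      stdNormalCDF ((b - 1 / (i + 1)) / Real.sqrt c)
        + (Qb (Gev (b - 1 / (i + 1)))).toReal / 2
        ≤ (Qb (Gev b)).toReal := by
    intro i
    have hpos : 0 < (1 : ℝ) / (i + 1) := by positivity
    have hb' : b - 1 / (i + 1) < 0 := by linarith
    have h1 := F_lower_step hB hc hb'
    refine le_trans h1 ?_
    apply ENNReal.toReal_mono (measure_ne_top _ _)
    apply measure_mono
    rintro ω ⟨u, hu, hub⟩
    exact ⟨u, hu, by linarith⟩
  have hsc : 0 < Real.sqrt c := Real.sqrt_pos.2 hc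
  have hKpos : 0 < (Real.sqrt (2 * Real.pi))⁻¹ :=
    inv_pos.2 (Real.sqrt_pos.2 (by positivity))
  have hΦtend : Tendsto (fun i : ℕ => stdNormalCDF ((b - 1 / (i + 1)) / Real.sqrt c)) atTop
      (𝓝 (stdNormalCDF (b / Real.sqrt c))) := by
    have hlow : ∀ i : ℕ, stdNormalCDF (b / Real.sqrt c)
        - 1 / (i + 1) / Real.sqrt c * (Real.sqrt (2 * Real.pi))⁻¹
        ≤ stdNormalCDF ((b - 1 / (i + 1)) / Real.sqrt c) := by
      intro i
      have hpos : 0 < (1 : ℝ) / (i + 1) := by positivity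
      have hle : (b - 1 / (i + 1)) / Real.sqrt c ≤ b / Real.sqrt c := by
        rw [div_le_div_iff₀ hsc hsc]
        nlinarith
      have := sNC_lipschitz hle
      have harg : b / Real.sqrt c - (b - 1 / (i + 1)) / Real.sqrt c
          = 1 / (i + 1) / Real.sqrt c := by ring
      rw [harg] at this
      linarith
    have hhigh : ∀ i : ℕ, stdNormalCDF ((b - 1 / (i + 1)) / Real.sqrt c)
        ≤ stdNormalCDF (b / Real.sqrt c) := by
      intro i
      apply sNC_mono
      have hpos : 0 < (1 : ℝ) / (i + 1) := by positivity
      rw [div_le_div_iff₀ hsc hsc]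
      nlinarith
    have htend0 : Tendsto (fun i : ℕ => (1 : ℝ) / (i + 1)) atTop (𝓝 0) :=
      tendsto_one_div_add_atTop_nhds_zero_nat
    have htendl : Tendsto (fun i : ℕ => stdNormalCDF (b / Real.sqrt c)
        - 1 / (i + 1) / Real.sqrt c * (Real.sqrt (2 * Real.pi))⁻¹) atTop
        (𝓝 (stdNormalCDF (b / Real.sqrt c))) := by
      have : Tendsto (fun i : ℕ => 1 / (i + 1) / Real.sqrt c
          * (Real.sqrt (2 * Real.pi))⁻¹) atTop (𝓝 0) := by
        have h2 := (htend0.div_const (Real.sqrt c)).mul_const (Real.sqrt (2 * Real.pi))⁻¹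
        simpa using h2
      have h3 := (tendsto_const_nhds (x := stdNormalCDF (b / Real.sqrt c))
        (f := atTop (α := ℕ))).sub this
      simpa using h3
    exact tendsto_of_tendsto_of_tendsto_of_le_of_le htendl tendsto_const_nhds hlow hhigh
  have hfull : Tendsto (fun i : ℕ => stdNormalCDF ((b - 1 / (i + 1)) / Real.sqrt c)
      + (Qb (Gev (b - 1 / (i + 1)))).toReal / 2) atTop
      (𝓝 (stdNormalCDF (b / Real.sqrt c) + (Qb (Gev b)).toReal / 2)) :=
    hΦtend.add (htm.div_const 2)
  have hrec : stdNormalCDF (b / Real.sqrt c) + (Qb (Gev b)).toReal / 2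
      ≤ (Qb (Gev b)).toReal :=
    le_of_tendsto hfull (Filter.Eventually.of_forall hstep)
  linarith

lemma F_eq (hB : IsStandardBM Qb B) {c b : ℝ} (hc : 0 < c) (hb : b < 0) :
    (Qb {ω | ∃ u ∈ Icc (0 : ℝ) c, B u ω ≤ b}).toReal
      = 2 * stdNormalCDF (b / Real.sqrt c) := by
  have h1 := F_upper hB hc hb
  have h2 := F_lower_step hB hc hb
  have h3 := G_lower hB hc hb
  linarith

end GLow

section FIN
variable {Ω : Type*} [MeasurableSpace Ω] {Qb : Measure Ω} [IsProbabilityMeasure Qb]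
  {B : ℝ → Ω → ℝ}

lemma Gev_meas (hB : IsStandardBM Qb B) {c : ℝ} (hc : 0 < c) (x : ℝ) :
    MeasurableSet {ω | ∃ u ∈ Icc (0 : ℝ) c, B u ω < x} := by
  have hBm := hB.2.2.1
  have he : {ω | ∃ u ∈ Icc (0 : ℝ) c, B u ω < x}
      = ⋃ q : ℚ, ⋃ (_ : (q : ℝ) ∈ Icc (0 : ℝ) c), {ω | B (q : ℝ) ω < x} := by
    ext ω
    simp only [mem_iUnion, mem_setOf_eq]
    constructor
    · rintro ⟨u, ⟨hu0, huc⟩, hub⟩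
      have hcont : Continuous fun t => B t ω := hB.2.1 ω
      have hopen : IsOpen ((fun t => B t ω) ⁻¹' Iio x) := isOpen_Iio.preimage hcont
      obtain ⟨η, hη, hball⟩ := Metric.isOpen_iff.1 hopen u hub
      by_cases hu : u = 0
      · obtain ⟨q, hq1, hq2⟩ := exists_rat_btwn (show (0 : ℝ) < min η c from lt_min hη hc)
        refine ⟨q, ⟨le_of_lt hq1, le_of_lt (lt_of_lt_of_le hq2 (min_le_right _ _))⟩, ?_⟩
        apply hball
        rw [Metric.mem_ball, Real.dist_eq, hu, sub_zero, abs_of_pos hq1]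
        exact lt_of_lt_of_le hq2 (min_le_left _ _)
      · have hupos : 0 < u := lt_of_le_of_ne hu0 (Ne.symm hu)
        obtain ⟨q, hq1, hq2⟩ := exists_rat_btwn
          (show max (u - η / 2) 0 < u from max_lt (by linarith) hupos)
        refine ⟨q, ⟨?_, ?_⟩, ?_⟩
        · exact le_of_lt (lt_of_le_of_lt (le_max_right _ _) hq1)
        · linarith
        · apply hball
          rw [Metric.mem_ball, Real.dist_eq, abs_sub_lt_iff]
          have h1 : u - η / 2 ≤ max (u - η / 2) 0 := le_max_left _ _
          constructor <;> linarith
    · rintro ⟨q, hq, hb⟩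
      exact ⟨q, hq, hb⟩
  rw [he]
  exact MeasurableSet.iUnion fun q => MeasurableSet.iUnion fun _ =>
    measurableSet_lt (hBm _) measurable_const

lemma Fev_meas (hB : IsStandardBM Qb B) {c : ℝ} (hc : 0 < c) (b : ℝ) :
    MeasurableSet {ω | ∃ u ∈ Icc (0 : ℝ) c, B u ω ≤ b} := by
  have he : {ω | ∃ u ∈ Icc (0 : ℝ) c, B u ω ≤ b}
      = ⋂ i : ℕ, {ω | ∃ u ∈ Icc (0 : ℝ) c, B u ω < b + 1 / (i + 1)} := by
    ext ω
    simp only [mem_iInter, mem_setOf_eq]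
    constructor
    · rintro ⟨u, hu, hub⟩ i
      refine ⟨u, hu, ?_⟩
      have : 0 < (1 : ℝ) / (i + 1) := by positivity
      linarith
    · intro hall
      have hcont : Continuous fun t => B t ω := hB.2.1 ω
      obtain ⟨u₀, hu₀, hmin⟩ := isCompact_Icc.exists_isMinOn (nonempty_Icc.2 hc.le)
        hcont.continuousOn
      refine ⟨u₀, hu₀, ?_⟩
      by_contra hcon
      push_neg at hcon
      obtain ⟨i, hi⟩ := exists_nat_one_div_lt (show (0 : ℝ) < B u₀ ω - b by linarith)
      obtain ⟨u, hu, hub⟩ := hall i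
      have hle : B u₀ ω ≤ B u ω := hmin hu
      linarith
  rw [he]
  exact MeasurableSet.iInter fun i => Gev_meas hB hc _

end FIN

/-- for `S_t = 1 + ∫_0^t σ^S_u dW_u = 1 + B_{∫_0^t (σ^S_u)² du}` (Dambis–
Dubins–Schwarz), `σ₁ = inf {t : S_t ≤ 0}`, `σ₂ = inf {t : σ^S_t ≤ σ̲}`, `σ = σ₁ ∧ σ₂`,
one has `Q̄[σ ≤ T] ≥ Q̄[B*_{σ̲²T} ≤ −1] = 2N(−1/(σ̲√T)) > 0`, hence
`Q̄[σ > T] ≤ 1 − 2N(−1/(σ̲√T)) < 1`, a bound independent of the ELMM `Q̄`. -/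
theorem volatility_bet_uniform_bound
    {Ω : Type*} [MeasurableSpace Ω] (Qb : Measure Ω) [IsProbabilityMeasure Qb]
    (B : ℝ → Ω → ℝ) (hB : IsStandardBM Qb B)
    (σS : ℝ → Ω → ℝ) (hσScont : ∀ ω, Continuous fun t => σS t ω)
    (sl : ℝ) (hsl : 0 < sl) (hsl0 : ∀ ω, sl < σS 0 ω)
    (S : ℝ → Ω → ℝ)
    -- Dambis–Dubins–Schwarz time change: `S t = 1 + B_{∫_0^t (σ^S_u)² du}`
    (hDDS : ∀ ω, ∀ t : ℝ, 0 ≤ t →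
      S t ω = 1 + B (∫ u in Set.Ioc (0 : ℝ) t, (σS u ω) ^ 2) ω)
    (T : ℝ) (hT : 0 < T) :
    (Qb {ω | ∃ u ∈ Set.Icc (0 : ℝ) (sl ^ 2 * T), B u ω ≤ -1}).toReal
        ≤ (Qb {ω | ∃ t ∈ Set.Icc (0 : ℝ) T, S t ω ≤ 0 ∨ σS t ω ≤ sl}).toReal ∧
    (Qb {ω | ∃ u ∈ Set.Icc (0 : ℝ) (sl ^ 2 * T), B u ω ≤ -1}).toReal
        = 2 * stdNormalCDF (-(1 / (sl * Real.sqrt T))) ∧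
    0 < 2 * stdNormalCDF (-(1 / (sl * Real.sqrt T))) ∧
    (Qb {ω | ∀ t ∈ Set.Icc (0 : ℝ) T, 0 < S t ω ∧ sl < σS t ω}).toReal
        ≤ 1 - 2 * stdNormalCDF (-(1 / (sl * Real.sqrt T))) ∧
    1 - 2 * stdNormalCDF (-(1 / (sl * Real.sqrt T))) < 1 := by
  have hc : (0 : ℝ) < sl ^ 2 * T := by positivity
  set c : ℝ := sl ^ 2 * T with hcdef
  set Bev : Set Ω := {ω | ∃ u ∈ Set.Icc (0 : ℝ) c, B u ω ≤ -1} with hBev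
  set Aev : Set Ω := {ω | ∃ t ∈ Set.Icc (0 : ℝ) T, S t ω ≤ 0 ∨ σS t ω ≤ sl} with hAev
  set Dev : Set Ω := {ω | ∀ t ∈ Set.Icc (0 : ℝ) T, 0 < S t ω ∧ sl < σS t ω} with hDev
  -- argument rewriting
  have hsq : Real.sqrt c = sl * Real.sqrt T := by
    rw [hcdef, Real.sqrt_mul (sq_nonneg sl), Real.sqrt_sq hsl.le]
  have harg : (-1 : ℝ) / Real.sqrt c = -(1 / (sl * Real.sqrt T)) := by
    rw [hsq]
    ring
  -- Part B : reflection principle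
  have hBval : (Qb Bev).toReal = 2 * stdNormalCDF (-(1 / (sl * Real.sqrt T))) := by
    rw [hBev, F_eq hB hc (by norm_num : (-1 : ℝ) < 0), harg]
  -- Part A : inclusion
  have hincl : Bev ⊆ Aev := by
    intro ω hω
    obtain ⟨u, ⟨hu0, huc⟩, hub⟩ := hω
    by_cases hσ : ∃ t ∈ Set.Icc (0 : ℝ) T, σS t ω ≤ sl
    · obtain ⟨t, ht, hle⟩ := hσ
      exact ⟨t, ht, Or.inr hle⟩
    push_neg at hσ
    have hfc : Continuous fun v => (σS v ω) ^ 2 := (hσScont ω).pow 2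
    set q : ℝ → ℝ := fun t => ∫ v in (0 : ℝ)..t, (σS v ω) ^ 2 with hq
    have hqc : Continuous q :=
      intervalIntegral.continuous_primitive (fun a b => hfc.intervalIntegrable a b) 0
    have hq0 : q 0 = 0 := intervalIntegral.integral_same
    have hqT : c ≤ q T := by
      have hmono : ∫ _ in (0 : ℝ)..T, sl ^ 2 ≤ ∫ v in (0 : ℝ)..T, (σS v ω) ^ 2 := by
        apply intervalIntegral.integral_mono_on hT.le intervalIntegrable_const
          (hfc.intervalIntegrable _ _)
        intro v hv
        have h1 : sl < σS v ω := hσ v hv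
        nlinarith
      rw [intervalIntegral.integral_const, smul_eq_mul, sub_zero] at hmono
      calc c = T * sl ^ 2 := by rw [hcdef]; ring
        _ ≤ q T := hmono
    have hmem : u ∈ Set.Icc (q 0) (q T) := by
      rw [hq0]
      exact ⟨hu0, le_trans huc hqT⟩
    obtain ⟨t, htIcc, hqt⟩ := intermediate_value_Icc hT.le hqc.continuousOn hmem
    refine ⟨t, htIcc, Or.inl ?_⟩
    have hS := hDDS ω t htIcc.1
    have hioc : ∫ v in Set.Ioc (0 : ℝ) t, (σS v ω) ^ 2 = u := by
      rw [← intervalIntegral.integral_of_le htIcc.1]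
      exact hqt
    rw [hS, hioc]
    linarith
  have hA : (Qb Bev).toReal ≤ (Qb Aev).toReal :=
    ENNReal.toReal_mono (measure_ne_top _ _) (measure_mono hincl)
  -- Part C : positivity
  have hC : 0 < 2 * stdNormalCDF (-(1 / (sl * Real.sqrt T))) := by
    have := sNC_pos (-(1 / (sl * Real.sqrt T)))
    linarith
  -- Part D : complement bound
  have hD : (Qb Dev).toReal ≤ 1 - 2 * stdNormalCDF (-(1 / (sl * Real.sqrt T))) := by
    have hBm : MeasurableSet Bev := Fev_meas hB hc (-1)
    have hdisj : Disjoint Dev Bev := by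
      rw [Set.disjoint_left]
      intro ω hωD hωB
      obtain ⟨t, ht, hor⟩ := hincl hωB
      obtain ⟨h1, h2⟩ := hωD t ht
      rcases hor with h | h
      · linarith
      · linarith
    have hun : Qb (Dev ∪ Bev) = Qb Dev + Qb Bev := measure_union hdisj hBm
    have hle1 : Qb (Dev ∪ Bev) ≤ 1 := prob_le_one
    have := ENNReal.toReal_mono (by norm_num) hle1
    rw [hun, ENNReal.toReal_add (measure_ne_top _ _) (measure_ne_top _ _)] at this
    rw [ENNReal.toReal_one] at this
    linarith [hBval ▸ this]
  exact ⟨hA, hBval, hC, hD, by linarith⟩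
end
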